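/- arXiv:2202.03383 — 4 statements merged into one kernel-verified Lean document; each statement's English description precedes it below -/
import Mathlib

section
/- Let d ∈ ℕ, m ∈ ℝ, a ∈ Ŝ^m(ℝ^d × ℝ^d), and ε > 0. Let χ ∈ C_c^∞(ℝ^d × ℝ^d) with 0 ≤ χ ≤ 1, χ(x,y) = 1 whenever |x| ≤ 1 and |y| ≤ 1, and χ(x,y) = 0 whenever |x| ≥ 2 or |y| ≥ 2. Then the family (x,y,k) ↦ a(x,y,k) · (χ(k^{1/2−ε} x, k^{1/2−ε} y) − 1) belongs to Ŝ^{m−r}(ℝ^d × ℝ^d) for every r ∈ ℕ; that is, it belongs to Ŝ^{−∞}(ℝ^d × ℝ^d). -/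
open MeasureTheory

noncomputable section

/-- `ℝ^d` with the Euclidean norm. -/
abbrev Vec (d : ℕ) : Type := EuclideanSpace ℝ (Fin d)

/-- Partial derivative in the first variable, in the `i`-th coordinate direction. -/
noncomputable def pdX {d : ℕ} (i : Fin d) (f : Vec d → Vec d → ℂ) : Vec d → Vec d → ℂ :=
  fun x y => fderiv ℝ (fun x' => f x' y) x (EuclideanSpace.single i (1 : ℝ))

/-- Partial derivative in the second variable, in the `i`-th coordinate direction. -/
noncomputable def pdY {d : ℕ} (i : Fin d) (f : Vec d → Vec d → ℂ) : Vec d → Vec d → ℂ :=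
  fun x y => fderiv ℝ (fun y' => f x y') y (EuclideanSpace.single i (1 : ℝ))

/-- Iterated mixed partial derivative `∂_x^α ∂_y^β`. -/
noncomputable def mpd {d : ℕ} (α β : Fin d → ℕ) (f : Vec d → Vec d → ℂ) :
    Vec d → Vec d → ℂ :=
  (List.finRange d).foldr (fun i g => (pdX i)^[α i] g)
    ((List.finRange d).foldr (fun i g => (pdY i)^[β i] g) f)

/-- The semiclassical symbol space `Ŝ^m(ℝ^d × ℝ^d)`: families `a(·,·,k)`, `k ∈ ℕ`, of smooth
functions such that for all multi-indices `α, β` there are `l, k₀` so that for every `N > 0`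
there is `C > 0` with
`|∂_x^α ∂_y^β a(x,y,k)| ≤ C k^{m+(|α|+|β|)/2} (1+√k|x|+√k|y|)^l / (1+√k|x−y|)^N`
for all `x, y` and all `k ≥ k₀`. -/
def SymbClass (d : ℕ) (m : ℝ) (a : ℕ → Vec d → Vec d → ℂ) : Prop :=
  (∀ k : ℕ, ContDiff ℝ (⊤ : ℕ∞) (fun p : Vec d × Vec d => a k p.1 p.2)) ∧
  ∀ α β : Fin d → ℕ, ∃ l : ℕ, ∃ k₀ : ℕ, ∀ N : ℝ, 0 < N → ∃ C : ℝ, 0 < C ∧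
    ∀ k : ℕ, k₀ ≤ k → ∀ x y : Vec d,
      ‖mpd α β (a k) x y‖ ≤
        C * (k : ℝ) ^ (m + (((∑ i, α i) + (∑ i, β i) : ℕ) : ℝ) / 2) *
          (1 + Real.sqrt k * ‖x‖ + Real.sqrt k * ‖y‖) ^ l /
          (1 + Real.sqrt k * ‖x - y‖) ^ N

/-- The space `Ŝ(ℝ^d × ℝ^d)` of smooth functions rapidly decreasing off the diagonal:
for all multi-indices `α, β` there is `l` so that for every `N > 0` there is `C > 0` with
`|∂_x^α ∂_y^β a(x,y)| ≤ C (1+|x|+|y|)^l / (1+|x−y|)^N` for all `x, y`. -/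
def SchwartzOffDiag (d : ℕ) (a : Vec d → Vec d → ℂ) : Prop :=
  ContDiff ℝ (⊤ : ℕ∞) (fun p : Vec d × Vec d => a p.1 p.2) ∧
  ∀ α β : Fin d → ℕ, ∃ l : ℕ, ∀ N : ℝ, 0 < N → ∃ C : ℝ, 0 < C ∧
    ∀ x y : Vec d,
      ‖mpd α β a x y‖ ≤ C * (1 + ‖x‖ + ‖y‖) ^ l / (1 + ‖x - y‖) ^ N

namespace S11
variable {d : ℕ}
abbrev P (d : ℕ) := Vec d × Vec d
noncomputable def Dv (v : P d) (F : P d → ℂ) : P d → ℂ := fun p => fderiv ℝ F p v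
noncomputable def mpdP (L : List (P d)) (F : P d → ℂ) : P d → ℂ := L.foldr Dv F
@[simp] lemma mpdP_nil (F : P d → ℂ) : mpdP [] F = F := rfl
lemma mpdP_cons (v : P d) (L : List (P d)) (F : P d → ℂ) :
    mpdP (v :: L) F = Dv v (mpdP L F) := rfl
lemma mpdP_append (L₁ L₂ : List (P d)) (F : P d → ℂ) :
    mpdP (L₁ ++ L₂) F = mpdP L₁ (mpdP L₂ F) := List.foldr_append ..
lemma Dv_contDiff {v : P d} {F : P d → ℂ} (hF : ContDiff ℝ (⊤ : ℕ∞) F) :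
    ContDiff ℝ (⊤ : ℕ∞) (Dv v F) := by
  have h1 : ContDiff ℝ (⊤ : ℕ∞) (fderiv ℝ F) := hF.fderiv_right (by exact_mod_cast le_top)
  exact h1.clm_apply contDiff_const
lemma mpdP_contDiff {F : P d → ℂ} (L : List (P d)) (hF : ContDiff ℝ (⊤ : ℕ∞) F) :
    ContDiff ℝ (⊤ : ℕ∞) (mpdP L F) := by
  induction L with
  | nil => exact hF
  | cons v L ih => exact Dv_contDiff ih
def uc (f : Vec d → Vec d → ℂ) : P d → ℂ := fun p => f p.1 p.2
def eX (i : Fin d) : P d := (EuclideanSpace.single i (1 : ℝ), 0)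
def eY (i : Fin d) : P d := (0, EuclideanSpace.single i (1 : ℝ))
lemma uc_pdX {f : Vec d → Vec d → ℂ} (hf : ContDiff ℝ (⊤ : ℕ∞) (uc f)) (i : Fin d) :
    uc (pdX i f) = Dv (eX i) (uc f) := by
  funext p
  have hder : HasFDerivAt (uc f) (fderiv ℝ (uc f) p) p :=
    (hf.differentiable (by simp) p).hasFDerivAt
  have hcomp : HasFDerivAt (fun x' : Vec d => uc f (x', p.2))
      ((fderiv ℝ (uc f) p).comp (ContinuousLinearMap.inl ℝ (Vec d) (Vec d))) p.1 := by
    have := HasFDerivAt.comp p.1 (f := fun e => (e, p.2)) hder (hasFDerivAt_prodMk_left p.1 p.2)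
    exact this
  show fderiv ℝ (fun x' => f x' p.2) p.1 (EuclideanSpace.single i 1) = _
  rw [show (fun x' => f x' p.2) = (fun x' : Vec d => uc f (x', p.2)) from rfl, hcomp.fderiv]
  rfl
lemma uc_pdY {f : Vec d → Vec d → ℂ} (hf : ContDiff ℝ (⊤ : ℕ∞) (uc f)) (i : Fin d) :
    uc (pdY i f) = Dv (eY i) (uc f) := by
  funext p
  have hder : HasFDerivAt (uc f) (fderiv ℝ (uc f) p) p :=
    (hf.differentiable (by simp) p).hasFDerivAt
  have hcomp : HasFDerivAt (fun y' : Vec d => uc f (p.1, y'))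
      ((fderiv ℝ (uc f) p).comp (ContinuousLinearMap.inr ℝ (Vec d) (Vec d))) p.2 := by
    have := HasFDerivAt.comp p.2 (f := fun e => (p.1, e)) hder (hasFDerivAt_prodMk_right p.1 p.2)
    exact this
  show fderiv ℝ (fun y' => f p.1 y') p.2 (EuclideanSpace.single i 1) = _
  rw [show (fun y' => f p.1 y') = (fun y' : Vec d => uc f (p.1, y')) from rfl, hcomp.fderiv]
  rfl

/-- iterate correspondence -/
lemma mpdP_replicate (n : ℕ) (v : P d) (F : P d → ℂ) :
    mpdP (List.replicate n v) F = (Dv v)^[n] F := by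
  induction n with
  | zero => rfl
  | succ n ih =>
    rw [List.replicate_succ, mpdP_cons, ih, Function.iterate_succ_apply']

lemma uc_pdX_iter {f : Vec d → Vec d → ℂ} (hf : ContDiff ℝ (⊤ : ℕ∞) (uc f)) (i : Fin d) (n : ℕ) :
    uc ((pdX i)^[n] f) = (Dv (eX i))^[n] (uc f) ∧ ContDiff ℝ (⊤ : ℕ∞) (uc ((pdX i)^[n] f)) := by
  induction n with
  | zero => exact ⟨rfl, hf⟩
  | succ n ih =>
    rw [Function.iterate_succ_apply', Function.iterate_succ_apply']
    refine ⟨?_, ?_⟩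
    · rw [uc_pdX ih.2, ih.1]
    · rw [uc_pdX ih.2]; exact Dv_contDiff (ih.1 ▸ ih.2)

lemma uc_pdY_iter {f : Vec d → Vec d → ℂ} (hf : ContDiff ℝ (⊤ : ℕ∞) (uc f)) (i : Fin d) (n : ℕ) :
    uc ((pdY i)^[n] f) = (Dv (eY i))^[n] (uc f) ∧ ContDiff ℝ (⊤ : ℕ∞) (uc ((pdY i)^[n] f)) := by
  induction n with
  | zero => exact ⟨rfl, hf⟩
  | succ n ih =>
    rw [Function.iterate_succ_apply', Function.iterate_succ_apply']
    refine ⟨?_, ?_⟩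
    · rw [uc_pdY ih.2, ih.1]
    · rw [uc_pdY ih.2]; exact Dv_contDiff (ih.1 ▸ ih.2)

/-- canonical list on an index list -/
def canonOn (l : List (Fin d)) (g : Fin d → ℕ) (e : Fin d → P d) : List (P d) :=
  l.foldr (fun i acc => List.replicate (g i) (e i) ++ acc) []

@[simp] lemma canonOn_nil (g : Fin d → ℕ) (e : Fin d → P d) : canonOn [] g e = [] := rfl
lemma canonOn_cons (i : Fin d) (l : List (Fin d)) (g : Fin d → ℕ) (e : Fin d → P d) :
    canonOn (i :: l) g e = List.replicate (g i) (e i) ++ canonOn l g e := rfl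

lemma canonOn_congr {l : List (Fin d)} {g g' : Fin d → ℕ} {e : Fin d → P d}
    (h : ∀ i ∈ l, g i = g' i) : canonOn l g e = canonOn l g' e := by
  induction l with
  | nil => rfl
  | cons i l ih =>
    rw [canonOn_cons, canonOn_cons, h i (by simp), ih (fun j hj => h j (by simp [hj]))]

lemma length_canonOn (l : List (Fin d)) (g : Fin d → ℕ) (e : Fin d → P d) :
    (canonOn l g e).length = (l.map g).sum := by
  induction l with
  | nil => rfl
  | cons i l ih => simp [canonOn_cons, ih]

/-- sublists of canonical lists are canonical -/
lemma sublist_canonOn {l : List (Fin d)} (hl : l.Nodup) {g : Fin d → ℕ} {e : Fin d → P d}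
    {s : List (P d)} (hs : s.Sublist (canonOn l g e)) :
    ∃ g' : Fin d → ℕ, (∀ i ∈ l, g' i ≤ g i) ∧ s = canonOn l g' e := by
  induction l generalizing s with
  | nil => exact ⟨fun _ => 0, by simp, by simpa using hs⟩
  | cons i l ih =>
    rw [canonOn_cons] at hs
    rcases List.sublist_append_iff.1 hs with ⟨s₁, s₂, rfl, h₁, h₂⟩
    rcases List.sublist_replicate_iff.1 h₁ with ⟨n, hn, rfl⟩
    rcases ih (List.nodup_cons.1 hl).2 h₂ with ⟨g'', hg'', rfl⟩
    have hi : i ∉ l := (List.nodup_cons.1 hl).1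
    refine ⟨Function.update g'' i n, ?_, ?_⟩
    · intro j hj
      rcases List.mem_cons.1 hj with rfl | hj
      · simpa using hn
      · rw [Function.update_apply]
        split
        · next h => exact h ▸ hn
        · exact hg'' j hj
    · rw [canonOn_cons, Function.update_self,
        canonOn_congr (g := g'') (g' := Function.update g'' i n)
          (fun j hj => (Function.update_of_ne (by rintro rfl; exact hi hj) n g'').symm)]

def canon (g : Fin d → ℕ) (e : Fin d → P d) : List (P d) := canonOn (List.finRange d) g e

lemma length_canon (g : Fin d → ℕ) (e : Fin d → P d) : (canon g e).length = ∑ i, g i := by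
  rw [canon, length_canonOn, Fin.sum_univ_def]

lemma uc_foldX {l : List (Fin d)} {f : Vec d → Vec d → ℂ} (hf : ContDiff ℝ (⊤ : ℕ∞) (uc f))
    (α : Fin d → ℕ) :
    uc (l.foldr (fun i g => (pdX i)^[α i] g) f) = mpdP (canonOn l α eX) (uc f) ∧
      ContDiff ℝ (⊤ : ℕ∞) (uc (l.foldr (fun i g => (pdX i)^[α i] g) f)) := by
  induction l with
  | nil => exact ⟨rfl, hf⟩
  | cons i l ih =>
    have h1 := uc_pdX_iter ih.2 i (α i)
    rw [List.foldr_cons]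
    refine ⟨?_, h1.2⟩
    rw [h1.1, ih.1, canonOn_cons, mpdP_append, mpdP_replicate]

lemma uc_foldY {l : List (Fin d)} {f : Vec d → Vec d → ℂ} (hf : ContDiff ℝ (⊤ : ℕ∞) (uc f))
    (β : Fin d → ℕ) :
    uc (l.foldr (fun i g => (pdY i)^[β i] g) f) = mpdP (canonOn l β eY) (uc f) ∧
      ContDiff ℝ (⊤ : ℕ∞) (uc (l.foldr (fun i g => (pdY i)^[β i] g) f)) := by
  induction l with
  | nil => exact ⟨rfl, hf⟩
  | cons i l ih =>
    have h1 := uc_pdY_iter ih.2 i (β i)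
    rw [List.foldr_cons]
    refine ⟨?_, h1.2⟩
    rw [h1.1, ih.1, canonOn_cons, mpdP_append, mpdP_replicate]

lemma uc_mpd {f : Vec d → Vec d → ℂ} (hf : ContDiff ℝ (⊤ : ℕ∞) (uc f)) (α β : Fin d → ℕ) :
    uc (mpd α β f) = mpdP (canon α eX ++ canon β eY) (uc f) := by
  have hY := uc_foldY (l := List.finRange d) hf β
  have hX := uc_foldX (l := List.finRange d) hY.2 α
  rw [mpd, hX.1, hY.1, mpdP_append]; rfl


/-- vanishing on an open set is preserved -/
lemma mpdP_eq_zero_on {U : Set (P d)} (hU : IsOpen U) {F : P d → ℂ}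
    (hF : ∀ p ∈ U, F p = 0) (L : List (P d)) : ∀ p ∈ U, mpdP L F p = 0 := by
  induction L with
  | nil => exact hF
  | cons v L ih =>
    intro p hp
    show fderiv ℝ (mpdP L F) p v = 0
    have hev : mpdP L F =ᶠ[nhds p] (fun _ => (0 : ℂ)) :=
      Filter.eventuallyEq_of_mem (hU.mem_nhds hp) (fun q hq => ih q hq)
    rw [hev.fderiv_eq, fderiv_fun_const]
    rfl

lemma mpdP_add {F G : P d → ℂ} (hF : ContDiff ℝ (⊤ : ℕ∞) F) (hG : ContDiff ℝ (⊤ : ℕ∞) G)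
    (L : List (P d)) : mpdP L (fun p => F p + G p) = fun p => mpdP L F p + mpdP L G p := by
  induction L with
  | nil => rfl
  | cons v L ih =>
    funext p
    show fderiv ℝ (mpdP L fun p => F p + G p) p v = _
    rw [ih]
    rw [fderiv_fun_add ((mpdP_contDiff L hF).differentiable (by simp) p)
      ((mpdP_contDiff L hG).differentiable (by simp) p)]
    rfl

lemma mpdP_const (c : ℂ) (L : List (P d)) :
    ∃ c' : ℂ, (mpdP L (fun _ => c) = fun _ => c') ∧ ‖c'‖ ≤ ‖c‖ := by
  induction L with
  | nil => exact ⟨c, rfl, le_rfl⟩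
  | cons v L ih =>
    rcases ih with ⟨c', hc', _⟩
    refine ⟨0, ?_, by simp⟩
    funext p
    show fderiv ℝ (mpdP L fun _ => c) p v = 0
    rw [hc', fderiv_fun_const]
    rfl

/-- scaling lemma -/
lemma mpdP_scale (c : ℝ) {G : P d → ℂ} (hG : ContDiff ℝ (⊤ : ℕ∞) G) (L : List (P d)) :
    mpdP L (fun p => G (c • p)) = fun p => (c : ℂ) ^ L.length * mpdP L G (c • p) := by
  induction L with
  | nil => simp
  | cons v L ih =>
    funext p
    show fderiv ℝ (mpdP L fun p => G (c • p)) p v = _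
    rw [ih]
    have hH : ContDiff ℝ (⊤ : ℕ∞) (mpdP L G) := mpdP_contDiff L hG
    have h1 : HasFDerivAt (fun q : P d => c • q) (c • ContinuousLinearMap.id ℝ (P d)) p :=
      (hasFDerivAt_id p).const_smul c
    have h2 : HasFDerivAt (mpdP L G) (fderiv ℝ (mpdP L G) (c • p)) (c • p) :=
      (hH.differentiable (by simp) (c • p)).hasFDerivAt
    have h3 : HasFDerivAt (fun q : P d => mpdP L G (c • q))
        ((fderiv ℝ (mpdP L G) (c • p)).comp (c • ContinuousLinearMap.id ℝ (P d))) p :=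
      h2.comp p h1
    have h4 : HasFDerivAt (fun q : P d => (c : ℂ) ^ L.length * mpdP L G (c • q))
        (((c : ℂ) ^ L.length) • ((fderiv ℝ (mpdP L G) (c • p)).comp
          (c • ContinuousLinearMap.id ℝ (P d)))) p := by
      have := h3.const_smul ((c : ℂ) ^ L.length)
      simpa [Pi.smul_def, smul_eq_mul] using this
    rw [h4.fderiv]
    simp [mpdP_cons, Dv, List.length_cons, pow_succ]
    ring

/-- Leibniz rule -/
lemma mpdP_leibniz (L : List (P d)) :
    ∃ n : ℕ, ∃ S : Fin n → List (P d) × List (P d),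
      (∀ j, (S j).1.Sublist L ∧ (S j).1.length + (S j).2.length = L.length) ∧
      ∀ F G : P d → ℂ, ContDiff ℝ (⊤ : ℕ∞) F → ContDiff ℝ (⊤ : ℕ∞) G →
        mpdP L (fun p => F p * G p) =
          fun p => ∑ j, mpdP (S j).1 F p * mpdP (S j).2 G p := by
  induction L with
  | nil =>
    exact ⟨1, fun _ => ([], []), fun j => ⟨List.Sublist.refl _, rfl⟩,
      fun F G _ _ => by simp⟩
  | cons v L ih =>
    rcases ih with ⟨n, S, hS, hEq⟩
    refine ⟨n + n, Fin.addCases (fun j => (v :: (S j).1, (S j).2))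
      (fun j => ((S j).1, v :: (S j).2)), ?_, ?_⟩
    · intro j
      refine Fin.addCases (fun j => ?_) (fun j => ?_) j
      · simp only [Fin.addCases_left]
        exact ⟨(hS j).1.cons₂ v, by simp [List.length_cons, ← (hS j).2]; omega⟩
      · simp only [Fin.addCases_right]
        exact ⟨(hS j).1.cons v, by simp [List.length_cons, ← (hS j).2]; omega⟩
    · intro F G hF hG
      funext p
      rw [mpdP_cons]
      show fderiv ℝ (mpdP L fun p => F p * G p) p v = _
      rw [hEq F G hF hG]
      have hdiffA : ∀ j : Fin n, DifferentiableAt ℝ (mpdP (S j).1 F) p := fun j =>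
        (mpdP_contDiff _ hF).differentiable (by simp) p
      have hdiffB : ∀ j : Fin n, DifferentiableAt ℝ (mpdP (S j).2 G) p := fun j =>
        (mpdP_contDiff _ hG).differentiable (by simp) p
      rw [fderiv_fun_sum (A := fun j y => mpdP (S j).1 F y * mpdP (S j).2 G y) (fun j _ => ((hdiffA j).mul (hdiffB j)))]
      rw [ContinuousLinearMap.sum_apply]
      rw [Fin.sum_univ_add]
      simp only [Fin.addCases_left, Fin.addCases_right]
      rw [← Finset.sum_add_distrib]
      congr 1
      funext j
      rw [fderiv_fun_mul (hdiffA j) (hdiffB j)]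
      simp only [mpdP_cons, Dv, ContinuousLinearMap.add_apply, ContinuousLinearMap.smul_apply,
        smul_eq_mul]
      ring


lemma bOne_bound (χ : P d → ℝ) (hs : ContDiff ℝ (⊤ : ℕ∞) χ) (hsupp : HasCompactSupport χ)
    (L : List (P d)) :
    ∃ M : ℝ, 0 ≤ M ∧ ∀ p, ‖mpdP L (fun p => ((χ p : ℝ) : ℂ) - 1) p‖ ≤ M := by
  have hsC : ContDiff ℝ (⊤ : ℕ∞) (fun p : P d => ((χ p : ℝ) : ℂ)) :=
    Complex.ofRealCLM.contDiff.comp hs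
  have hcs : HasCompactSupport (mpdP L (fun p : P d => ((χ p : ℝ) : ℂ))) := by
    refine HasCompactSupport.intro (K := tsupport χ) hsupp ?_
    intro p hp
    refine mpdP_eq_zero_on (isClosed_tsupport χ).isOpen_compl ?_ L p hp
    intro q hq
    simp [image_eq_zero_of_notMem_tsupport hq]
  obtain ⟨C1, hC1⟩ := hcs.exists_bound_of_continuous (mpdP_contDiff L hsC).continuous
  obtain ⟨c', hc', hc'le⟩ := mpdP_const (d := d) (-1) L
  have hsplit : (fun p : P d => ((χ p : ℝ) : ℂ) - 1) =
      fun p => ((χ p : ℝ) : ℂ) + (fun _ : P d => (-1 : ℂ)) p := by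
    funext p; ring
  refine ⟨max C1 0 + 1, by positivity, fun p => ?_⟩
  rw [hsplit, mpdP_add hsC contDiff_const, hc']
  calc ‖mpdP L (fun p : P d => ((χ p : ℝ) : ℂ)) p + c'‖
      ≤ ‖mpdP L (fun p : P d => ((χ p : ℝ) : ℂ)) p‖ + ‖c'‖ := norm_add_le _ _
    _ ≤ max C1 0 + 1 := by
        have := hC1 p
        have h2 : ‖c'‖ ≤ 1 := by simpa using hc'le
        have : ‖mpdP L (fun p : P d => ((χ p : ℝ) : ℂ)) p‖ ≤ max C1 0 :=
          le_trans (hC1 p) (le_max_left _ _)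
        linarith

lemma bOne_vanish (χ : P d → ℝ)
    (hχone : ∀ p : P d, ‖p.1‖ ≤ 1 → ‖p.2‖ ≤ 1 → χ p = 1) (L : List (P d)) :
    ∀ p : P d, ‖p.1‖ < 1 → ‖p.2‖ < 1 → mpdP L (fun p => ((χ p : ℝ) : ℂ) - 1) p = 0 := by
  intro p hp1 hp2
  have hU : IsOpen {q : P d | ‖q.1‖ < 1 ∧ ‖q.2‖ < 1} := by
    exact IsOpen.inter (isOpen_lt (continuous_norm.comp continuous_fst) continuous_const)
      (isOpen_lt (continuous_norm.comp continuous_snd) continuous_const)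
  refine mpdP_eq_zero_on hU ?_ L p ⟨hp1, hp2⟩
  intro q hq
  rw [hχone q hq.1.le hq.2.le]
  simp

end S11

open S11

set_option maxHeartbeats 1000000

/-- If `a ∈ Ŝ^m(ℝ^d × ℝ^d)`, `ε > 0`, and `χ ∈ C_c^∞(ℝ^d × ℝ^d)` with `0 ≤ χ ≤ 1`,
`χ(x,y) = 1` for `|x| ≤ 1, |y| ≤ 1` and `χ(x,y) = 0` for `|x| ≥ 2` or `|y| ≥ 2`, then
`(x,y,k) ↦ a(x,y,k)·(χ(k^{1/2−ε}x, k^{1/2−ε}y) − 1)` belongs to `Ŝ^{m−r}(ℝ^d × ℝ^d)` for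
every `r ∈ ℕ`, i.e. it belongs to `Ŝ^{−∞}(ℝ^d × ℝ^d)`. -/
theorem stmt11 (d : ℕ) (m : ℝ) (a : ℕ → Vec d → Vec d → ℂ) (ha : SymbClass d m a)
    (ε : ℝ) (hε : 0 < ε) (χ : Vec d × Vec d → ℝ)
    (hχsmooth : ContDiff ℝ (⊤ : ℕ∞) χ) (hχsupp : HasCompactSupport χ)
    (hχ0 : ∀ p, 0 ≤ χ p) (hχ1 : ∀ p, χ p ≤ 1)
    (hχone : ∀ p : Vec d × Vec d, ‖p.1‖ ≤ 1 → ‖p.2‖ ≤ 1 → χ p = 1)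
    (hχzero : ∀ p : Vec d × Vec d, 2 ≤ ‖p.1‖ ∨ 2 ≤ ‖p.2‖ → χ p = 0) :
    ∀ r : ℕ, SymbClass d (m - r)
      (fun k x y => a k x y *
        (((χ ((k : ℝ) ^ ((1 : ℝ) / 2 - ε) • x, (k : ℝ) ^ ((1 : ℝ) / 2 - ε) • y) : ℝ) : ℂ)
          - 1)) := by
  intro r
  -- notation
  set b1 : P d → ℂ := fun p => ((χ p : ℝ) : ℂ) - 1 with hb1def
  have hb1smooth : ContDiff ℝ (⊤ : ℕ∞) b1 :=
    (Complex.ofRealCLM.contDiff.comp hχsmooth).sub contDiff_const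
  have hbksmooth : ∀ k : ℕ, ContDiff ℝ (⊤ : ℕ∞)
      (fun p : P d => b1 ((k : ℝ) ^ ((1 : ℝ) / 2 - ε) • p)) := fun k =>
    hb1smooth.comp (contDiff_id.const_smul _)
  constructor
  · intro k
    exact (ha.1 k).mul (hbksmooth k)
  · intro α β
    set nn : ℕ := (∑ i, α i) + (∑ i, β i) with hnn
    set L : List (P d) := canon α eX ++ canon β eY with hL
    have hLlen : L.length = nn := by
      rw [hL, List.length_append, length_canon, length_canon]
    obtain ⟨n, S, hS, hEq⟩ := mpdP_leibniz L
    have hsplit : ∀ j : Fin n, ∃ γ δ : Fin d → ℕ,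
        (S j).1 = canon γ eX ++ canon δ eY := by
      intro j
      have h1 := (hS j).1
      rw [hL] at h1
      rcases List.sublist_append_iff.1 h1 with ⟨s₁, s₂, hs, h₁, h₂⟩
      rcases sublist_canonOn (List.nodup_finRange d) h₁ with ⟨γ, _, rfl⟩
      rcases sublist_canonOn (List.nodup_finRange d) h₂ with ⟨δ, _, rfl⟩
      exact ⟨γ, δ, hs⟩
    choose γf δf hγδ using hsplit
    choose lf k₀f hbound using fun j => ha.2 (γf j) (δf j)
    choose Mb hMb0 hMb using fun j => bOne_bound χ hχsmooth hχsupp (S j).2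
    set Mexp : ℕ := ⌈(r : ℝ) / ε⌉₊ with hMexp
    refine ⟨Finset.univ.sup lf + Mexp, Finset.univ.sup k₀f + 1, ?_⟩
    intro N hN
    choose Cf hCf0 hCf using fun j => hbound j N hN
    have hsumnn : 0 ≤ ∑ j, Cf j * Mb j :=
      Finset.sum_nonneg fun j _ => mul_nonneg (hCf0 j).le (hMb0 j)
    refine ⟨∑ j, Cf j * Mb j + 1, by linarith, ?_⟩
    intro k hk x y
    -- basic facts
    have hk1 : (1 : ℝ) ≤ (k : ℝ) := by exact_mod_cast Nat.one_le_iff_ne_zero.2 (by omega)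
    have hk0 : (0 : ℝ) < (k : ℝ) := by linarith
    set lam : ℝ := (k : ℝ) ^ ((1 : ℝ) / 2 - ε) with hlam
    have hlam0 : 0 ≤ lam := Real.rpow_nonneg hk0.le _
    set Sv : ℝ := 1 + Real.sqrt k * ‖x‖ + Real.sqrt k * ‖y‖ with hSv
    set Dw : ℝ := 1 + Real.sqrt k * ‖x - y‖ with hDw
    have hsq0 : 0 ≤ Real.sqrt (k : ℝ) := Real.sqrt_nonneg _
    have hSv1 : 1 ≤ Sv := by
      rw [hSv]; nlinarith [norm_nonneg x, norm_nonneg y]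
    have hD0 : (0 : ℝ) < Dw := by
      rw [hDw]; nlinarith [norm_nonneg (x - y)]
    have hDN : (0 : ℝ) < Dw ^ N := Real.rpow_pos_of_pos hD0 N
    set bk : P d → ℂ := fun p => b1 (lam • p) with hbkdef
    set l : ℕ := Finset.univ.sup lf + Mexp with hldef
    set E2 : ℝ := m - r + (nn : ℝ) / 2 with hE2
    have hfac : 0 ≤ (k : ℝ) ^ E2 * Sv ^ l / Dw ^ N := by
      apply div_nonneg _ hDN.le
      exact mul_nonneg (Real.rpow_nonneg hk0.le _) (pow_nonneg (by linarith) _)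
    -- rewrite LHS
    have key : (fun (k' : ℕ) (x' y' : Vec d) => a k' x' y' *
        (((χ ((k' : ℝ) ^ ((1 : ℝ) / 2 - ε) • x', (k' : ℝ) ^ ((1 : ℝ) / 2 - ε) • y') : ℝ) : ℂ)
          - 1)) k = fun x' y' => a k x' y' * bk (x', y') := rfl
    have h3 : mpdP L (uc (fun x' y' => a k x' y' * bk (x', y'))) =
        fun p => ∑ j, mpdP (S j).1 (uc (a k)) p * mpdP (S j).2 bk p :=
      hEq (uc (a k)) bk (ha.1 k) (hbksmooth k)
    have hEq2 : mpd α β (fun x' y' => a k x' y' * bk (x', y')) x y =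
        ∑ j, mpdP (S j).1 (uc (a k)) (x, y) * mpdP (S j).2 bk (x, y) := by
      have h2 : uc (mpd α β (fun x' y' => a k x' y' * bk (x', y'))) =
          mpdP L (uc (fun x' y' => a k x' y' * bk (x', y'))) :=
        uc_mpd (f := fun x' y' => a k x' y' * bk (x', y'))
          (by exact (ha.1 k).mul (hbksmooth k)) α β
      calc mpd α β (fun x' y' => a k x' y' * bk (x', y')) x y
          = uc (mpd α β (fun x' y' => a k x' y' * bk (x', y'))) (x, y) := rfl
        _ = mpdP L (uc (fun x' y' => a k x' y' * bk (x', y'))) (x, y) := by rw [h2]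
        _ = ∑ j, mpdP (S j).1 (uc (a k)) (x, y) * mpdP (S j).2 bk (x, y) := by rw [h3]
    rw [key, hEq2]
    by_cases hcase : lam * ‖x‖ < 1 ∧ lam * ‖y‖ < 1
    · -- all terms vanish
      have hz : ∀ j : Fin n, mpdP (S j).2 bk (x, y) = 0 := by
        intro j
        have hscale := congrFun (mpdP_scale lam hb1smooth (S j).2) (x, y)
        have hvan : mpdP (S j).2 b1 (lam • ((x, y) : P d)) = 0 := by
          apply bOne_vanish χ hχone
          · show ‖lam • x‖ < 1
            rw [norm_smul, Real.norm_eq_abs, abs_of_nonneg hlam0]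
            exact hcase.1
          · show ‖lam • y‖ < 1
            rw [norm_smul, Real.norm_eq_abs, abs_of_nonneg hlam0]
            exact hcase.2
        rw [hbkdef, hscale, hvan, mul_zero]
      rw [Finset.sum_congr rfl (fun j _ => by rw [hz j, mul_zero]), Finset.sum_const_zero]
      simp only [norm_zero]
      have : (0:ℝ) ≤ (∑ j, Cf j * Mb j + 1) * (k : ℝ) ^ E2 * Sv ^ l / Dw ^ N := by
        apply div_nonneg _ hDN.le
        apply mul_nonneg (mul_nonneg (by linarith) (Real.rpow_nonneg hk0.le _))
          (pow_nonneg (by linarith) _)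
      linarith
    · -- main case
      rw [not_and_or, not_lt, not_lt] at hcase
      have hke : (k : ℝ) ^ ε ≤ Sv := by
        have hsqrt : Real.sqrt (k : ℝ) = (k : ℝ) ^ ((1 : ℝ) / 2) := Real.sqrt_eq_rpow _
        have hmul : (k : ℝ) ^ ε * lam = (k : ℝ) ^ ((1 : ℝ) / 2) := by
          rw [hlam, ← Real.rpow_add hk0]; ring_nf
        have hkε0 : 0 ≤ (k : ℝ) ^ ε := Real.rpow_nonneg hk0.le _
        rcases hcase with h | h
        · have h1 : (k : ℝ) ^ ε * 1 ≤ (k : ℝ) ^ ε * (lam * ‖x‖) :=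
            mul_le_mul_of_nonneg_left h hkε0
          have h2 : (k : ℝ) ^ ε * (lam * ‖x‖) = Real.sqrt k * ‖x‖ := by
            rw [hsqrt, ← hmul]; ring
          rw [hSv]; nlinarith [mul_nonneg hsq0 (norm_nonneg y)]
        · have h1 : (k : ℝ) ^ ε * 1 ≤ (k : ℝ) ^ ε * (lam * ‖y‖) :=
            mul_le_mul_of_nonneg_left h hkε0
          have h2 : (k : ℝ) ^ ε * (lam * ‖y‖) = Real.sqrt k * ‖y‖ := by
            rw [hsqrt, ← hmul]; ring
          rw [hSv]; nlinarith [mul_nonneg hsq0 (norm_nonneg x)]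
      have hterm : ∀ j : Fin n,
          ‖mpdP (S j).1 (uc (a k)) (x, y) * mpdP (S j).2 bk (x, y)‖ ≤
            (Cf j * Mb j) * ((k : ℝ) ^ E2 * Sv ^ l / Dw ^ N) := by
        intro j
        have hk' : k₀f j ≤ k := le_trans (Finset.le_sup (Finset.mem_univ j)) (by omega)
        have hA0 := hCf j k hk' x y
        have hAeq : mpdP (S j).1 (uc (a k)) (x, y) = mpd (γf j) (δf j) (a k) x y := by
          rw [hγδ j, ← uc_mpd (ha.1 k)]
          rfl
        set c1 : ℕ := (∑ i, γf j i) + (∑ i, δf j i) with hc1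
        set n2 : ℕ := (S j).2.length with hn2
        have hA : ‖mpdP (S j).1 (uc (a k)) (x, y)‖ ≤
            Cf j * (k : ℝ) ^ (m + (c1 : ℝ) / 2) * Sv ^ lf j / Dw ^ N := by
          rw [hAeq]; exact hA0
        have hBeq : mpdP (S j).2 bk (x, y) =
            ((lam : ℂ)) ^ n2 * mpdP (S j).2 b1 (lam • ((x, y) : P d)) :=
          congrFun (mpdP_scale lam hb1smooth (S j).2) (x, y)
        have hB : ‖mpdP (S j).2 bk (x, y)‖ ≤ lam ^ n2 * Mb j := by
          rw [hBeq, norm_mul]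
          have h1 : ‖((lam : ℂ)) ^ n2‖ = lam ^ n2 := by
            rw [norm_pow, Complex.norm_real, Real.norm_eq_abs, abs_of_nonneg hlam0]
          rw [h1]
          exact mul_le_mul_of_nonneg_left (hMb j _) (pow_nonneg hlam0 _)
        have hlen1 : c1 = (S j).1.length := by
          rw [hc1, hγδ j, List.length_append, length_canon, length_canon]
        have hlen : c1 + n2 = nn := by rw [hlen1, hn2, ← hLlen]; exact (hS j).2
        have hcore : (k : ℝ) ^ (m + (c1 : ℝ) / 2) * lam ^ n2 * Sv ^ lf j ≤
            (k : ℝ) ^ E2 * Sv ^ l := by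
          have e1 : lam ^ n2 = (k : ℝ) ^ (((1 : ℝ) / 2 - ε) * n2) := by
            rw [hlam, ← Real.rpow_natCast ((k : ℝ) ^ ((1 : ℝ) / 2 - ε)) n2,
              ← Real.rpow_mul hk0.le]
          have hcnn : (c1 : ℝ) + (n2 : ℝ) = (nn : ℝ) := by exact_mod_cast hlen
          have e2 : (k : ℝ) ^ (m + (c1 : ℝ) / 2) * (k : ℝ) ^ (((1 : ℝ) / 2 - ε) * n2) ≤
              (k : ℝ) ^ (m + (nn : ℝ) / 2) := by
            rw [← Real.rpow_add hk0]
            apply Real.rpow_le_rpow_of_exponent_le hk1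
            have hn2r : (0 : ℝ) ≤ (n2 : ℝ) := Nat.cast_nonneg _
            nlinarith [mul_nonneg hε.le hn2r]
          have e3 : (k : ℝ) ^ (m + (nn : ℝ) / 2) = (k : ℝ) ^ E2 * (k : ℝ) ^ (r : ℝ) := by
            rw [← Real.rpow_add hk0]; congr 1; rw [hE2]; ring
          have e4 : (k : ℝ) ^ (r : ℝ) ≤ Sv ^ Mexp := by
            have h5 : (k : ℝ) ^ (r : ℝ) ≤ (k : ℝ) ^ (ε * Mexp) := by
              apply Real.rpow_le_rpow_of_exponent_le hk1
              have h7 := Nat.le_ceil ((r : ℝ) / ε)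
              rw [div_le_iff₀ hε] at h7
              rw [hMexp] at *
              nlinarith
            have h6 : (k : ℝ) ^ (ε * Mexp) = ((k : ℝ) ^ ε) ^ Mexp := by
              rw [Real.rpow_mul hk0.le, Real.rpow_natCast]
            have h8 : ((k : ℝ) ^ ε) ^ Mexp ≤ Sv ^ Mexp :=
              pow_le_pow_left₀ (Real.rpow_nonneg hk0.le ε) hke Mexp
            rw [h6] at h5
            exact h5.trans h8
          have e5 : Sv ^ Mexp * Sv ^ lf j ≤ Sv ^ l := by
            rw [← pow_add]
            apply pow_le_pow_right₀ hSv1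
            have := Finset.le_sup (f := lf) (Finset.mem_univ j)
            omega
          calc (k : ℝ) ^ (m + (c1 : ℝ) / 2) * lam ^ n2 * Sv ^ lf j
              = ((k : ℝ) ^ (m + (c1 : ℝ) / 2) * (k : ℝ) ^ (((1 : ℝ) / 2 - ε) * n2)) *
                Sv ^ lf j := by rw [e1]
            _ ≤ (k : ℝ) ^ (m + (nn : ℝ) / 2) * Sv ^ lf j :=
                mul_le_mul_of_nonneg_right e2 (pow_nonneg (by linarith) _)
            _ = (k : ℝ) ^ E2 * ((k : ℝ) ^ (r : ℝ) * Sv ^ lf j) := by rw [e3]; ring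
            _ ≤ (k : ℝ) ^ E2 * (Sv ^ Mexp * Sv ^ lf j) := by
                apply mul_le_mul_of_nonneg_left _ (Real.rpow_nonneg hk0.le _)
                exact mul_le_mul_of_nonneg_right e4 (pow_nonneg (by linarith) _)
            _ ≤ (k : ℝ) ^ E2 * Sv ^ l :=
                mul_le_mul_of_nonneg_left e5 (Real.rpow_nonneg hk0.le _)
        calc ‖mpdP (S j).1 (uc (a k)) (x, y) * mpdP (S j).2 bk (x, y)‖
            = ‖mpdP (S j).1 (uc (a k)) (x, y)‖ * ‖mpdP (S j).2 bk (x, y)‖ := norm_mul _ _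
          _ ≤ (Cf j * (k : ℝ) ^ (m + (c1 : ℝ) / 2) * Sv ^ lf j / Dw ^ N) *
              (lam ^ n2 * Mb j) :=
              mul_le_mul hA hB (norm_nonneg _) ((norm_nonneg _).trans hA)
          _ = (Cf j * Mb j) *
              (((k : ℝ) ^ (m + (c1 : ℝ) / 2) * lam ^ n2 * Sv ^ lf j) / Dw ^ N) := by ring
          _ ≤ (Cf j * Mb j) * ((k : ℝ) ^ E2 * Sv ^ l / Dw ^ N) := by
              apply mul_le_mul_of_nonneg_left _ (mul_nonneg (hCf0 j).le (hMb0 j))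
              rw [div_eq_mul_inv, div_eq_mul_inv]
              exact mul_le_mul_of_nonneg_right hcore (inv_nonneg.2 hDN.le)
      calc ‖∑ j, mpdP (S j).1 (uc (a k)) (x, y) * mpdP (S j).2 bk (x, y)‖
          ≤ ∑ j, ‖mpdP (S j).1 (uc (a k)) (x, y) * mpdP (S j).2 bk (x, y)‖ :=
            norm_sum_le _ _
        _ ≤ ∑ j, (Cf j * Mb j) * ((k : ℝ) ^ E2 * Sv ^ l / Dw ^ N) :=
            Finset.sum_le_sum fun j _ => hterm j
        _ = (∑ j, Cf j * Mb j) * ((k : ℝ) ^ E2 * Sv ^ l / Dw ^ N) := by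
            rw [← Finset.sum_mul]
        _ ≤ (∑ j, Cf j * Mb j + 1) * ((k : ℝ) ^ E2 * Sv ^ l / Dw ^ N) :=
            mul_le_mul_of_nonneg_right (by linarith) hfac
        _ = (∑ j, Cf j * Mb j + 1) * (k : ℝ) ^ E2 * Sv ^ l / Dw ^ N := by ring
end
end

section
/- Let d ∈ ℕ, m ∈ ℝ, ε ∈ (0, 1/2], and a ∈ Ŝ^m(ℝ^d × ℝ^d). Let χ, χ̃ ∈ C_c^∞(ℝ^d) with values in [0,1] such that supp χ ⊆ {|y| ≤ 1} and dist(supp(1 − χ̃), supp χ) > 0. For k ∈ ℕ set χ_k(y) := χ(8 k^{1/2−ε} y) and χ̃_k(x) := χ̃(8 k^{1/2−ε} x). Then for every compact set K ⊆ ℝ^d × ℝ^d, all multi-indices α, β ∈ ℕ^d, and every N ∈ ℕ, there exist C > 0 and k₀ ∈ ℕ such that for all k ≥ k₀, sup_{(x,y) ∈ K} |∂_x^α ∂_y^β [ (1 − χ̃_k(x)) · a(x,y,k) · χ_k(y) ]| ≤ C k^{−N}. -/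
open MeasureTheory

noncomputable section

section lists
variable {d : ℕ} {γ : Type*}

lemma foldr_eq_of_zero (s : Fin d → γ → γ) (α : Fin d → ℕ) (L : List (Fin d))
    (h : ∀ j ∈ L, α j = 0) (g : γ) :
    L.foldr (fun j t => (s j)^[α j] t) g = g := by
  induction L with
  | nil => rfl
  | cons a L ih =>
    simp only [List.foldr_cons, ih (fun j hj => h j (List.mem_cons_of_mem a hj)),
      h a List.mem_cons_self]
    rfl

lemma foldr_congr' (s : Fin d → γ → γ) (α α' : Fin d → ℕ) (L : List (Fin d))
    (h : ∀ j ∈ L, α j = α' j) (g : γ) :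
    L.foldr (fun j t => (s j)^[α j] t) g = L.foldr (fun j t => (s j)^[α' j] t) g := by
  induction L with
  | nil => rfl
  | cons a L ih =>
    simp only [List.foldr_cons, ih (fun j hj => h j (List.mem_cons_of_mem a hj)),
      h a List.mem_cons_self]

lemma foldr_peel (s : Fin d → γ → γ) (α : Fin d → ℕ) (i : Fin d)
    (h : ∀ j, j < i → α j = 0) (g : γ) :
    (List.finRange d).foldr (fun j t => (s j)^[Function.update α i (α i + 1) j] t) g
      = s i ((List.finRange d).foldr (fun j t => (s j)^[α j] t) g) := by
  obtain ⟨L₁, L₂, hL⟩ := List.append_of_mem (List.mem_finRange i)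
  have hpw := List.pairwise_lt_finRange d
  rw [hL] at hpw
  rw [List.pairwise_append] at hpw
  obtain ⟨h1, h2, h12⟩ := hpw
  have hL1lt : ∀ j ∈ L₁, j < i := fun j hj => h12 j hj i List.mem_cons_self
  have hL2gt : ∀ j ∈ L₂, i < j := fun j hj => (List.pairwise_cons.mp h2).1 j hj
  have hL1zero : ∀ j ∈ L₁, Function.update α i (α i + 1) j = 0 := by
    intro j hj
    rw [Function.update_of_ne (ne_of_lt (hL1lt j hj)) ]
    exact h j (hL1lt j hj)
  have hL1zero' : ∀ j ∈ L₁, α j = 0 := fun j hj => h j (hL1lt j hj)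
  have hL2same : ∀ j ∈ L₂, Function.update α i (α i + 1) j = α j := by
    intro j hj
    exact Function.update_of_ne (ne_of_gt (hL2gt j hj)) _ _
  rw [hL, List.foldr_append, List.foldr_append, List.foldr_cons, List.foldr_cons]
  rw [foldr_eq_of_zero _ _ _ hL1zero, foldr_eq_of_zero _ _ _ hL1zero']
  rw [foldr_congr' s _ α L₂ hL2same]
  rw [Function.update_self]
  rw [Function.iterate_succ_apply']

lemma mpd_zero_zero {d : ℕ} (f : Vec d → Vec d → ℂ) : mpd 0 0 f = f := by
  unfold mpd
  rw [foldr_eq_of_zero pdX (0 : Fin d → ℕ) _ (fun j _ => rfl),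
    foldr_eq_of_zero pdY (0 : Fin d → ℕ) _ (fun j _ => rfl)]

lemma mpd_succX {d : ℕ} (α β : Fin d → ℕ) (i : Fin d) (h : ∀ j, j < i → α j = 0)
    (f : Vec d → Vec d → ℂ) :
    mpd (Function.update α i (α i + 1)) β f = pdX i (mpd α β f) := by
  unfold mpd
  exact foldr_peel pdX α i h _

lemma mpd_succY {d : ℕ} (β : Fin d → ℕ) (j : Fin d) (h : ∀ j', j' < j → β j' = 0)
    (f : Vec d → Vec d → ℂ) :
    mpd 0 (Function.update β j (β j + 1)) f = pdY j (mpd 0 β f) := by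
  unfold mpd
  rw [foldr_eq_of_zero pdX (0 : Fin d → ℕ) _ (fun j' _ => rfl),
    foldr_eq_of_zero pdX (0 : Fin d → ℕ) _ (fun j' _ => rfl)]
  exact foldr_peel pdY β j h f

end lists
section analysis
variable {d : ℕ}

lemma diff_partial_x (f : Vec d → Vec d → ℂ)
    (hf : ContDiff ℝ (⊤ : ℕ∞) (fun p : Vec d × Vec d => f p.1 p.2)) (y : Vec d) :
    Differentiable ℝ (fun x => f x y) :=
  (hf.differentiable (by simp)).comp (differentiable_id.prodMk (differentiable_const y))

lemma diff_partial_y (f : Vec d → Vec d → ℂ)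
    (hf : ContDiff ℝ (⊤ : ℕ∞) (fun p : Vec d × Vec d => f p.1 p.2)) (x : Vec d) :
    Differentiable ℝ (fun y => f x y) :=
  (hf.differentiable (by simp)).comp ((differentiable_const x).prodMk differentiable_id)

lemma pdX_eq (i : Fin d) (f : Vec d → Vec d → ℂ)
    (hf : ContDiff ℝ (⊤ : ℕ∞) (fun p : Vec d × Vec d => f p.1 p.2)) (x y : Vec d) :
    pdX i f x y = fderiv ℝ (fun p : Vec d × Vec d => f p.1 p.2) (x, y)
      (EuclideanSpace.single i (1 : ℝ), 0) := by
  have hd : DifferentiableAt ℝ (fun p : Vec d × Vec d => f p.1 p.2) (x, y) :=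
    (hf.differentiable (by simp)) (x, y)
  have h1 : HasFDerivAt (fun x' => f x' y)
      ((fderiv ℝ (fun p : Vec d × Vec d => f p.1 p.2) (x, y)).comp
        (ContinuousLinearMap.inl ℝ (Vec d) (Vec d))) x :=
    (hd.hasFDerivAt.comp x (hasFDerivAt_prodMk_left (𝕜 := ℝ) x y) :)
  rw [pdX, h1.fderiv]
  rfl

lemma pdY_eq (i : Fin d) (f : Vec d → Vec d → ℂ)
    (hf : ContDiff ℝ (⊤ : ℕ∞) (fun p : Vec d × Vec d => f p.1 p.2)) (x y : Vec d) :
    pdY i f x y = fderiv ℝ (fun p : Vec d × Vec d => f p.1 p.2) (x, y)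
      (0, EuclideanSpace.single i (1 : ℝ)) := by
  have hd : DifferentiableAt ℝ (fun p : Vec d × Vec d => f p.1 p.2) (x, y) :=
    (hf.differentiable (by simp)) (x, y)
  have h1 : HasFDerivAt (fun y' => f x y')
      ((fderiv ℝ (fun p : Vec d × Vec d => f p.1 p.2) (x, y)).comp
        (ContinuousLinearMap.inr ℝ (Vec d) (Vec d))) y :=
    hd.hasFDerivAt.comp y (hasFDerivAt_prodMk_right (𝕜 := ℝ) x y)
  rw [pdY, h1.fderiv]
  rfl

lemma contDiff_pdX (i : Fin d) (f : Vec d → Vec d → ℂ)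
    (hf : ContDiff ℝ (⊤ : ℕ∞) (fun p : Vec d × Vec d => f p.1 p.2)) :
    ContDiff ℝ (⊤ : ℕ∞) (fun p : Vec d × Vec d => pdX i f p.1 p.2) := by
  have : (fun p : Vec d × Vec d => pdX i f p.1 p.2)
      = fun p : Vec d × Vec d => (ContinuousLinearMap.apply ℝ ℂ
          ((EuclideanSpace.single i (1 : ℝ), 0) : Vec d × Vec d))
          (fderiv ℝ (fun p : Vec d × Vec d => f p.1 p.2) p) := by
    funext p
    exact pdX_eq i f hf p.1 p.2
  rw [this]
  exact (ContinuousLinearMap.apply ℝ ℂ _).contDiff.comp (hf.fderiv_right (m := ((⊤:ℕ∞) : WithTop ℕ∞)) (by exact_mod_cast le_top))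

lemma contDiff_pdY (i : Fin d) (f : Vec d → Vec d → ℂ)
    (hf : ContDiff ℝ (⊤ : ℕ∞) (fun p : Vec d × Vec d => f p.1 p.2)) :
    ContDiff ℝ (⊤ : ℕ∞) (fun p : Vec d × Vec d => pdY i f p.1 p.2) := by
  have : (fun p : Vec d × Vec d => pdY i f p.1 p.2)
      = fun p : Vec d × Vec d => (ContinuousLinearMap.apply ℝ ℂ
          ((0, EuclideanSpace.single i (1 : ℝ)) : Vec d × Vec d))
          (fderiv ℝ (fun p : Vec d × Vec d => f p.1 p.2) p) := by
    funext p
    exact pdY_eq i f hf p.1 p.2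
  rw [this]
  exact (ContinuousLinearMap.apply ℝ ℂ _).contDiff.comp (hf.fderiv_right (m := ((⊤:ℕ∞) : WithTop ℕ∞)) (by exact_mod_cast le_top))

lemma contDiff_mpd (α β : Fin d → ℕ) (f : Vec d → Vec d → ℂ)
    (hf : ContDiff ℝ (⊤ : ℕ∞) (fun p : Vec d × Vec d => f p.1 p.2)) :
    ContDiff ℝ (⊤ : ℕ∞) (fun p : Vec d × Vec d => mpd α β f p.1 p.2) := by
  have key : ∀ (pd : Fin d → (Vec d → Vec d → ℂ) → Vec d → Vec d → ℂ),
      (∀ (i : Fin d) (g : Vec d → Vec d → ℂ),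
        ContDiff ℝ (⊤ : ℕ∞) (fun p : Vec d × Vec d => g p.1 p.2) →
        ContDiff ℝ (⊤ : ℕ∞) (fun p : Vec d × Vec d => pd i g p.1 p.2)) →
      ∀ (γ : Fin d → ℕ) (L : List (Fin d)) (g : Vec d → Vec d → ℂ),
        ContDiff ℝ (⊤ : ℕ∞) (fun p : Vec d × Vec d => g p.1 p.2) →
        ContDiff ℝ (⊤ : ℕ∞) (fun p : Vec d × Vec d =>
          (L.foldr (fun j t => (pd j)^[γ j] t) g) p.1 p.2) := by
    intro pd hpd γ L
    induction L with
    | nil => intro g hg; exact hg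
    | cons a L ih =>
      intro g hg
      simp only [List.foldr_cons]
      have : ∀ (n : ℕ) (h : Vec d → Vec d → ℂ),
          ContDiff ℝ (⊤ : ℕ∞) (fun p : Vec d × Vec d => h p.1 p.2) →
          ContDiff ℝ (⊤ : ℕ∞) (fun p : Vec d × Vec d => ((pd a)^[n] h) p.1 p.2) := by
        intro n
        induction n with
        | zero => intro h hh; exact hh
        | succ n ihn =>
          intro h hh
          rw [Function.iterate_succ_apply']
          exact hpd a _ (ihn h hh)
      exact this (γ a) _ (ih g hg)
  exact key pdX (fun i g hg => contDiff_pdX i g hg) α (List.finRange d) _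
    (key pdY (fun i g hg => contDiff_pdY i g hg) β (List.finRange d) f hf)

lemma pdX_add (i : Fin d) (F G : Vec d → Vec d → ℂ)
    (hF : ContDiff ℝ (⊤ : ℕ∞) (fun p : Vec d × Vec d => F p.1 p.2))
    (hG : ContDiff ℝ (⊤ : ℕ∞) (fun p : Vec d × Vec d => G p.1 p.2)) (x y : Vec d) :
    pdX i (fun x y => F x y + G x y) x y = pdX i F x y + pdX i G x y := by
  unfold pdX
  rw [fderiv_fun_add ((diff_partial_x F hF y) x) ((diff_partial_x G hG y) x)]
  rfl

lemma pdY_add (i : Fin d) (F G : Vec d → Vec d → ℂ)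
    (hF : ContDiff ℝ (⊤ : ℕ∞) (fun p : Vec d × Vec d => F p.1 p.2))
    (hG : ContDiff ℝ (⊤ : ℕ∞) (fun p : Vec d × Vec d => G p.1 p.2)) (x y : Vec d) :
    pdY i (fun x y => F x y + G x y) x y = pdY i F x y + pdY i G x y := by
  unfold pdY
  rw [fderiv_fun_add ((diff_partial_y F hF x) y) ((diff_partial_y G hG x) y)]
  rfl

lemma pdX_zero_fun (i : Fin d) (x y : Vec d) :
    pdX i (fun _ _ => (0 : ℂ)) x y = 0 := by
  unfold pdX
  rw [fderiv_fun_const]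
  rfl

lemma pdY_zero_fun (i : Fin d) (x y : Vec d) :
    pdY i (fun _ _ => (0 : ℂ)) x y = 0 := by
  unfold pdY
  rw [fderiv_fun_const]
  rfl

end analysis
section terms
variable {d : ℕ}

noncomputable def pdR {d : ℕ} (i : Fin d) (g : Vec d → ℝ) : Vec d → ℝ :=
  fun z => fderiv ℝ g z (EuclideanSpace.single i (1 : ℝ))

def BddDerivs {d : ℕ} (g : Vec d → ℝ) : Prop :=
  ∀ n : ℕ, ∃ M : ℝ, ∀ x, ‖iteratedFDeriv ℝ n g x‖ ≤ M

lemma contDiff_pdR (i : Fin d) (g : Vec d → ℝ) (hg : ContDiff ℝ (⊤ : ℕ∞) g) :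
    ContDiff ℝ (⊤ : ℕ∞) (pdR i g) :=
  (ContinuousLinearMap.apply ℝ ℝ (EuclideanSpace.single i (1 : ℝ))).contDiff.comp
    (hg.fderiv_right (m := ((⊤:ℕ∞) : WithTop ℕ∞)) (by exact_mod_cast le_top))

lemma tsupport_pdR_subset (i : Fin d) (g : Vec d → ℝ) :
    tsupport (pdR i g) ⊆ tsupport g := by
  apply closure_minimal _ (isClosed_tsupport g)
  intro z hz
  have : fderiv ℝ g z ≠ 0 := by
    intro h0
    apply hz
    simp [pdR, h0]
  exact support_fderiv_subset ℝ this

lemma bdd_pdR (i : Fin d) (g : Vec d → ℝ) (hg : ContDiff ℝ (⊤ : ℕ∞) g)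
    (hb : BddDerivs g) : BddDerivs (pdR i g) := by
  intro n
  obtain ⟨M, hM⟩ := hb (n + 1)
  refine ⟨‖EuclideanSpace.single i (1:ℝ)‖ * M, fun x => ?_⟩
  have hco : iteratedFDeriv ℝ n (pdR i g) x =
      (ContinuousLinearMap.apply ℝ ℝ (EuclideanSpace.single i (1:ℝ))).compContinuousMultilinearMap
        (iteratedFDeriv ℝ n (fderiv ℝ g) x) := by
    have : pdR i g = (ContinuousLinearMap.apply ℝ ℝ (EuclideanSpace.single i (1:ℝ))) ∘
        (fderiv ℝ g) := rfl
    rw [this]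
    exact (ContinuousLinearMap.apply ℝ ℝ (EuclideanSpace.single i (1:ℝ))).iteratedFDeriv_comp_left
      (hg.fderiv_right (m := ((⊤:ℕ∞) : WithTop ℕ∞)) (by exact_mod_cast le_top)).contDiffAt
      (by exact_mod_cast le_top)
  rw [hco]
  calc ‖(ContinuousLinearMap.apply ℝ ℝ (EuclideanSpace.single i (1:ℝ))).compContinuousMultilinearMap
        (iteratedFDeriv ℝ n (fderiv ℝ g) x)‖
      ≤ ‖ContinuousLinearMap.apply ℝ ℝ (EuclideanSpace.single i (1:ℝ))‖ *
        ‖iteratedFDeriv ℝ n (fderiv ℝ g) x‖ :=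
        ContinuousLinearMap.norm_compContinuousMultilinearMap_le _ _
    _ ≤ ‖EuclideanSpace.single i (1:ℝ)‖ * ‖iteratedFDeriv ℝ n (fderiv ℝ g) x‖ := by
        apply mul_le_mul_of_nonneg_right _ (norm_nonneg _)
        apply ContinuousLinearMap.opNorm_le_bound _ (norm_nonneg _)
        intro f
        rw [ContinuousLinearMap.apply_apply, mul_comm]
        exact f.le_opNorm _
    _ ≤ ‖EuclideanSpace.single i (1:ℝ)‖ * M := by
        apply mul_le_mul_of_nonneg_left _ (norm_nonneg _)
        rw [norm_iteratedFDeriv_fderiv]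
        exact hM x

structure TD (d : ℕ) where
  j : ℕ
  g : Vec d → ℝ
  h : Vec d → ℝ
  A : Fin d → ℕ
  B : Fin d → ℕ

noncomputable def ck (ε : ℝ) (k : ℕ) : ℝ := 8 * (k : ℝ) ^ ((1 : ℝ) / 2 - ε)

noncomputable def rl {d : ℕ} (ε : ℝ) (a : ℕ → Vec d → Vec d → ℂ) (t : TD d) (k : ℕ) :
    Vec d → Vec d → ℂ :=
  fun x y => ((ck ε k ^ t.j : ℝ) : ℂ) * ((t.g (ck ε k • x) : ℝ) : ℂ) *
    ((t.h (ck ε k • y) : ℝ) : ℂ) * mpd t.A t.B (a k) x y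

lemma contDiff_rl (ε : ℝ) (a : ℕ → Vec d → Vec d → ℂ) (t : TD d) (k : ℕ)
    (hg : ContDiff ℝ (⊤ : ℕ∞) t.g) (hh : ContDiff ℝ (⊤ : ℕ∞) t.h)
    (ha : ContDiff ℝ (⊤ : ℕ∞) (fun p : Vec d × Vec d => a k p.1 p.2)) :
    ContDiff ℝ (⊤ : ℕ∞) (fun p : Vec d × Vec d => rl ε a t k p.1 p.2) := by
  unfold rl
  refine ContDiff.mul (ContDiff.mul (ContDiff.mul contDiff_const ?_) ?_) ?_
  · exact Complex.ofRealCLM.contDiff.comp (hg.comp (contDiff_fst.const_smul (ck ε k)))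
  · exact Complex.ofRealCLM.contDiff.comp (hh.comp (contDiff_snd.const_smul (ck ε k)))
  · exact contDiff_mpd _ _ _ ha

lemma pdX_rl (ε : ℝ) (a : ℕ → Vec d → Vec d → ℂ) (i : Fin d) (t : TD d) (k : ℕ)
    (hg : ContDiff ℝ (⊤ : ℕ∞) t.g)
    (ha : ContDiff ℝ (⊤ : ℕ∞) (fun p : Vec d × Vec d => a k p.1 p.2))
    (hA : ∀ j, j < i → t.A j = 0) (x y : Vec d) :
    pdX i (rl ε a t k) x y =
      rl ε a ⟨t.j + 1, pdR i t.g, t.h, t.A, t.B⟩ k x y +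
      rl ε a ⟨t.j, t.g, t.h, Function.update t.A i (t.A i + 1), t.B⟩ k x y := by
  set c := ck ε k with hc
  set v := EuclideanSpace.single i (1 : ℝ) with hv
  have hmA := contDiff_mpd t.A t.B (a k) ha
  have hφ : HasFDerivAt (fun x' : Vec d => ((t.g (c • x') : ℝ) : ℂ))
      (Complex.ofRealCLM.comp ((fderiv ℝ t.g (c • x)).comp
        (c • ContinuousLinearMap.id ℝ (Vec d)))) x := by
    have h1 : HasFDerivAt (fun x' : Vec d => c • x') (c • ContinuousLinearMap.id ℝ (Vec d)) x :=
      (hasFDerivAt_id x).const_smul c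
    have h2 : HasFDerivAt t.g (fderiv ℝ t.g (c • x)) (c • x) :=
      ((hg.differentiable (by simp)) (c • x)).hasFDerivAt
    exact Complex.ofRealCLM.hasFDerivAt.comp x (h2.comp x h1)
  have hA1 : HasFDerivAt (fun x' => mpd t.A t.B (a k) x' y)
      (fderiv ℝ (fun x' => mpd t.A t.B (a k) x' y) x) x :=
    ((diff_partial_x _ hmA y) x).hasFDerivAt
  have heq : (fun x' => rl ε a t k x' y)
      = fun x' => (((c ^ t.j : ℝ) : ℂ) * ((t.h (c • y) : ℝ) : ℂ)) *
          (((t.g (c • x') : ℝ) : ℂ) * mpd t.A t.B (a k) x' y) := by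
    funext x'
    simp only [rl, ← hc]
    ring
  have hfull := (hφ.mul hA1).const_mul (((c ^ t.j : ℝ) : ℂ) * ((t.h (c • y) : ℝ) : ℂ))
  simp only [Pi.mul_apply] at hfull
  rw [pdX, heq, hfull.fderiv]
  have hDA : fderiv ℝ (fun x' => mpd t.A t.B (a k) x' y) x v
      = mpd (Function.update t.A i (t.A i + 1)) t.B (a k) x y := by
    rw [mpd_succX t.A t.B i hA (a k)]
    rfl
  simp only [ContinuousLinearMap.coe_smul', Pi.smul_apply, ContinuousLinearMap.add_apply,
    ContinuousLinearMap.smul_apply, ContinuousLinearMap.coe_comp', Function.comp_apply,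
    ContinuousLinearMap.coe_id', id_eq, hDA]
  have hDφ : Complex.ofRealCLM ((fderiv ℝ t.g (c • x)) (c • v)) = ((c * pdR i t.g (c • x) : ℝ) : ℂ) := by
    rw [(fderiv ℝ t.g (c • x)).map_smul]
    simp [pdR, ← hv]
  rw [hDφ]
  rw [← hv, hDA]
  simp only [rl, smul_eq_mul]
  push_cast
  ring

lemma pdY_rl (ε : ℝ) (a : ℕ → Vec d → Vec d → ℂ) (i : Fin d) (t : TD d) (k : ℕ)
    (hh : ContDiff ℝ (⊤ : ℕ∞) t.h)
    (ha : ContDiff ℝ (⊤ : ℕ∞) (fun p : Vec d × Vec d => a k p.1 p.2))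
    (hA0 : t.A = 0) (hB : ∀ j, j < i → t.B j = 0) (x y : Vec d) :
    pdY i (rl ε a t k) x y =
      rl ε a ⟨t.j + 1, t.g, pdR i t.h, t.A, t.B⟩ k x y +
      rl ε a ⟨t.j, t.g, t.h, t.A, Function.update t.B i (t.B i + 1)⟩ k x y := by
  set c := ck ε k with hc
  set v := EuclideanSpace.single i (1 : ℝ) with hv
  have hmA := contDiff_mpd t.A t.B (a k) ha
  have hφ : HasFDerivAt (fun y' : Vec d => ((t.h (c • y') : ℝ) : ℂ))
      (Complex.ofRealCLM.comp ((fderiv ℝ t.h (c • y)).comp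
        (c • ContinuousLinearMap.id ℝ (Vec d)))) y := by
    have h1 : HasFDerivAt (fun y' : Vec d => c • y') (c • ContinuousLinearMap.id ℝ (Vec d)) y :=
      (hasFDerivAt_id y).const_smul c
    have h2 : HasFDerivAt t.h (fderiv ℝ t.h (c • y)) (c • y) :=
      ((hh.differentiable (by simp)) (c • y)).hasFDerivAt
    exact Complex.ofRealCLM.hasFDerivAt.comp y (h2.comp y h1)
  have hA1 : HasFDerivAt (fun y' => mpd t.A t.B (a k) x y')
      (fderiv ℝ (fun y' => mpd t.A t.B (a k) x y') y) y :=
    ((diff_partial_y _ hmA x) y).hasFDerivAt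
  have heq : (fun y' => rl ε a t k x y')
      = fun y' => (((c ^ t.j : ℝ) : ℂ) * ((t.g (c • x) : ℝ) : ℂ)) *
          (((t.h (c • y') : ℝ) : ℂ) * mpd t.A t.B (a k) x y') := by
    funext y'
    simp only [rl, ← hc]
    ring
  have hfull := (hφ.mul hA1).const_mul (((c ^ t.j : ℝ) : ℂ) * ((t.g (c • x) : ℝ) : ℂ))
  simp only [Pi.mul_apply] at hfull
  rw [pdY, heq, hfull.fderiv]
  have hDA : fderiv ℝ (fun y' => mpd t.A t.B (a k) x y') y v
      = mpd t.A (Function.update t.B i (t.B i + 1)) (a k) x y := by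
    rw [hA0, mpd_succY t.B i hB (a k)]
    rfl
  simp only [ContinuousLinearMap.coe_smul', Pi.smul_apply, ContinuousLinearMap.add_apply,
    ContinuousLinearMap.smul_apply, ContinuousLinearMap.coe_comp', Function.comp_apply,
    ContinuousLinearMap.coe_id', id_eq]
  rw [hA0] at hDA ⊢
  rw [hDA]
  have hDφ : Complex.ofRealCLM ((fderiv ℝ t.h (c • y)) (c • v)) = ((c * pdR i t.h (c • y) : ℝ) : ℂ) := by
    rw [(fderiv ℝ t.h (c • y)).map_smul]
    simp [pdR, ← hv]
  rw [hDφ]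
  simp only [rl, smul_eq_mul]
  push_cast
  ring

end terms
section steps
variable {d : ℕ}

def GP {d : ℕ} (χt : Vec d → ℝ) (g : Vec d → ℝ) : Prop :=
  ContDiff ℝ (⊤ : ℕ∞) g ∧ tsupport g ⊆ tsupport (fun z => 1 - χt z) ∧ BddDerivs g

def HP {d : ℕ} (χ : Vec d → ℝ) (h : Vec d → ℝ) : Prop :=
  ContDiff ℝ (⊤ : ℕ∞) h ∧ tsupport h ⊆ tsupport χ ∧ BddDerivs h

lemma GP.pd {χt g : Vec d → ℝ} (i : Fin d) (h : GP χt g) : GP χt (pdR i g) :=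
  ⟨contDiff_pdR i g h.1, (tsupport_pdR_subset i g).trans h.2.1, bdd_pdR i g h.1 h.2.2⟩

lemma HP.pd {χ h : Vec d → ℝ} (i : Fin d) (hh : HP χ h) : HP χ (pdR i h) :=
  ⟨contDiff_pdR i h hh.1, (tsupport_pdR_subset i h).trans hh.2.1, bdd_pdR i h hh.1 hh.2.2⟩

def OKt (χ χt : Vec d → ℝ) (α β : Fin d → ℕ) (t : TD d) : Prop :=
  GP χt t.g ∧ HP χ t.h ∧ t.A ≤ α ∧ t.B ≤ β

lemma le_update_succ (α : Fin d → ℕ) (i : Fin d) :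
    α ≤ Function.update α i (α i + 1) := by
  intro j
  rcases eq_or_ne j i with h | h
  · subst h; simp
  · simp [Function.update_of_ne h]

lemma update_le_update (α α' : Fin d → ℕ) (i : Fin d) (h : α ≤ α') :
    Function.update α i (α i + 1) ≤ Function.update α' i (α' i + 1) := by
  intro j
  rcases eq_or_ne j i with hj | hj
  · subst hj; simp only [Function.update_self]; exact Nat.succ_le_succ (h j)
  · simp only [Function.update_of_ne hj]; exact h j

lemma contDiff_sumT (χ χt : Vec d → ℝ) (ε : ℝ) (a : ℕ → Vec d → Vec d → ℂ) (k : ℕ)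
    (ha : ContDiff ℝ (⊤ : ℕ∞) (fun p : Vec d × Vec d => a k p.1 p.2))
    (T : List (TD d)) (hv : ∀ t ∈ T, ContDiff ℝ (⊤ : ℕ∞) t.g ∧ ContDiff ℝ (⊤ : ℕ∞) t.h) :
    ContDiff ℝ (⊤ : ℕ∞) (fun p : Vec d × Vec d => (T.map (fun t => rl ε a t k p.1 p.2)).sum) := by
  induction T with
  | nil => simpa using contDiff_const
  | cons t ts ih =>
    have h1 := hv t List.mem_cons_self
    have h2 := ih (fun u hu => hv u (List.mem_cons_of_mem t hu))
    simp only [List.map_cons, List.sum_cons]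
    exact (contDiff_rl ε a t k h1.1 h1.2 ha).add h2

lemma stepX (χ χt : Vec d → ℝ) (ε : ℝ) (a : ℕ → Vec d → Vec d → ℂ)
    (ha : ∀ k, ContDiff ℝ (⊤ : ℕ∞) (fun p : Vec d × Vec d => a k p.1 p.2))
    (i : Fin d) (α' β : Fin d → ℕ) (hi : ∀ j, j < i → α' j = 0)
    (T' : List (TD d)) (hv : ∀ t ∈ T', OKt χ χt α' β t) :
    ∃ T : List (TD d), (∀ t ∈ T, OKt χ χt (Function.update α' i (α' i + 1)) β t) ∧
      ∀ k x y, pdX i (fun x y => (T'.map (fun t => rl ε a t k x y)).sum) x y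
        = (T.map (fun t => rl ε a t k x y)).sum := by
  induction T' with
  | nil =>
    refine ⟨[], by simp, fun k x y => ?_⟩
    simpa using pdX_zero_fun i x y
  | cons t ts ih =>
    obtain ⟨T2, hT2v, hT2⟩ := ih (fun u hu => hv u (List.mem_cons_of_mem t hu))
    have hvt := hv t List.mem_cons_self
    have hAlt : ∀ j, j < i → t.A j = 0 := by
      intro j hj
      have h2 : t.A j ≤ α' j := hvt.2.2.1 j
      rw [hi j hj] at h2
      exact Nat.le_zero.mp h2
    refine ⟨⟨t.j + 1, pdR i t.g, t.h, t.A, t.B⟩ ::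
      ⟨t.j, t.g, t.h, Function.update t.A i (t.A i + 1), t.B⟩ :: T2, ?_, ?_⟩
    · intro u hu
      simp only [List.mem_cons] at hu
      rcases hu with rfl | rfl | hu
      · exact ⟨hvt.1.pd i, hvt.2.1,
          (hvt.2.2.1).trans (le_update_succ α' i), hvt.2.2.2⟩
      · exact ⟨hvt.1, hvt.2.1,
          update_le_update t.A α' i hvt.2.2.1, hvt.2.2.2⟩
      · exact hT2v u hu
    · intro k x y
      have hsplit : (fun x y => (((t :: ts).map (fun t => rl ε a t k x y)).sum))
          = fun x y => rl ε a t k x y + ((ts.map (fun t => rl ε a t k x y)).sum) := by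
        funext x y; simp
      rw [hsplit, pdX_add i _ _ (contDiff_rl ε a t k hvt.1.1 hvt.2.1.1 (ha k))
        (contDiff_sumT χ χt ε a k (ha k) ts
          (fun u hu => ⟨(hv u (List.mem_cons_of_mem t hu)).1.1,
            (hv u (List.mem_cons_of_mem t hu)).2.1.1⟩)),
        pdX_rl ε a i t k hvt.1.1 (ha k) hAlt, hT2 k x y]
      simp only [List.map_cons, List.sum_cons]
      ring

lemma stepY (χ χt : Vec d → ℝ) (ε : ℝ) (a : ℕ → Vec d → Vec d → ℂ)
    (ha : ∀ k, ContDiff ℝ (⊤ : ℕ∞) (fun p : Vec d × Vec d => a k p.1 p.2))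
    (i : Fin d) (β' : Fin d → ℕ) (hi : ∀ j, j < i → β' j = 0)
    (T' : List (TD d)) (hv : ∀ t ∈ T', OKt χ χt 0 β' t) :
    ∃ T : List (TD d), (∀ t ∈ T, OKt χ χt 0 (Function.update β' i (β' i + 1)) t) ∧
      ∀ k x y, pdY i (fun x y => (T'.map (fun t => rl ε a t k x y)).sum) x y
        = (T.map (fun t => rl ε a t k x y)).sum := by
  induction T' with
  | nil =>
    refine ⟨[], by simp, fun k x y => ?_⟩
    simpa using pdY_zero_fun i x y
  | cons t ts ih =>
    obtain ⟨T2, hT2v, hT2⟩ := ih (fun u hu => hv u (List.mem_cons_of_mem t hu))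
    have hvt := hv t List.mem_cons_self
    have hA0 : t.A = 0 := by
      funext j
      have := hvt.2.2.1 j
      simpa using this
    have hBlt : ∀ j, j < i → t.B j = 0 := by
      intro j hj
      have h2 : t.B j ≤ β' j := hvt.2.2.2 j
      rw [hi j hj] at h2
      exact Nat.le_zero.mp h2
    refine ⟨⟨t.j + 1, t.g, pdR i t.h, t.A, t.B⟩ ::
      ⟨t.j, t.g, t.h, t.A, Function.update t.B i (t.B i + 1)⟩ :: T2, ?_, ?_⟩
    · intro u hu
      simp only [List.mem_cons] at hu
      rcases hu with rfl | rfl | hu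
      · exact ⟨hvt.1, hvt.2.1.pd i,
          hvt.2.2.1, (hvt.2.2.2).trans (le_update_succ β' i)⟩
      · exact ⟨hvt.1, hvt.2.1,
          hvt.2.2.1, update_le_update t.B β' i hvt.2.2.2⟩
      · exact hT2v u hu
    · intro k x y
      have hsplit : (fun x y => (((t :: ts).map (fun t => rl ε a t k x y)).sum))
          = fun x y => rl ε a t k x y + ((ts.map (fun t => rl ε a t k x y)).sum) := by
        funext x y; simp
      rw [hsplit, pdY_add i _ _ (contDiff_rl ε a t k hvt.1.1 hvt.2.1.1 (ha k))
        (contDiff_sumT χ χt ε a k (ha k) ts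
          (fun u hu => ⟨(hv u (List.mem_cons_of_mem t hu)).1.1,
            (hv u (List.mem_cons_of_mem t hu)).2.1.1⟩)),
        pdY_rl ε a i t k hvt.2.1.1 (ha k) hA0 hBlt, hT2 k x y]
      simp only [List.map_cons, List.sum_cons]
      ring

lemma exists_least {d : ℕ} (α : Fin d → ℕ) (hα : α ≠ 0) :
    ∃ i, α i ≠ 0 ∧ ∀ j, j < i → α j = 0 := by
  have hne : ∃ i, α i ≠ 0 := by
    by_contra h
    push_neg at h
    exact hα (funext h)
  set s : Finset (Fin d) := Finset.univ.filter (fun i => α i ≠ 0) with hs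
  have hsne : s.Nonempty := by
    obtain ⟨i, hi⟩ := hne
    exact ⟨i, by simp [hs, hi]⟩
  refine ⟨s.min' hsne, ?_, ?_⟩
  · have := s.min'_mem hsne
    simp [hs] at this
    exact this
  · intro j hj
    by_contra hne'
    have : j ∈ s := by simp [hs, hne']
    exact absurd (s.min'_le j this) (not_le.mpr hj)

lemma sum_update_sub {d : ℕ} (α : Fin d → ℕ) (i : Fin d) (h : α i ≠ 0) :
    (∑ j, Function.update α i (α i - 1) j) + 1 = ∑ j, α j := by
  rw [Finset.sum_update_of_mem (Finset.mem_univ i)]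
  have : ∑ j, α j = α i + ∑ j ∈ Finset.univ \ {i}, α j := by
    rw [← Finset.sum_update_of_mem (Finset.mem_univ i)]
    congr 1
    funext j
    by_cases hj : j = i
    · subst hj; rw [Function.update_self]
    · rw [Function.update_of_ne hj]
  rw [this]
  omega

lemma update_sub_add {d : ℕ} (α : Fin d → ℕ) (i : Fin d) (h : α i ≠ 0) :
    Function.update (Function.update α i (α i - 1)) i
      (Function.update α i (α i - 1) i + 1) = α := by
  funext j
  by_cases hj : j = i
  · subst hj
    rw [Function.update_self, Function.update_self]
    omega
  · rw [Function.update_of_ne hj, Function.update_of_ne hj]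

end steps
section mainrep
variable {d : ℕ}

lemma bddDerivs_of_compact_support (g : Vec d → ℝ) (hg : ContDiff ℝ (⊤ : ℕ∞) g)
    (hc : HasCompactSupport g) : BddDerivs g := by
  intro n
  exact (hg.continuous_iteratedFDeriv (by exact_mod_cast le_top)).bounded_above_of_compact_support
    (hc.iteratedFDeriv n)

lemma bddDerivs_one_sub (χt : Vec d → ℝ) (hχt : ContDiff ℝ (⊤ : ℕ∞) χt)
    (hχtc : HasCompactSupport χt) (h01 : ∀ x, 0 ≤ χt x ∧ χt x ≤ 1) :
    BddDerivs (fun z => 1 - χt z) := by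
  intro n
  match n with
  | 0 =>
    refine ⟨1, fun x => ?_⟩
    rw [norm_iteratedFDeriv_zero]
    have := h01 x
    rw [Real.norm_eq_abs, abs_le]
    constructor <;> linarith
  | (n + 1) =>
    obtain ⟨M, hM⟩ := bddDerivs_of_compact_support χt hχt hχtc (n + 1)
    refine ⟨M, fun x => ?_⟩
    have heq : iteratedFDeriv ℝ (n + 1) (fun z => 1 - χt z) x
        = iteratedFDeriv ℝ (n + 1) (fun z => (1 : ℝ)) x
          + iteratedFDeriv ℝ (n + 1) (fun z => -χt z) x := by
      exact iteratedFDeriv_add_apply' contDiff_const.contDiffAt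
        ((hχt.of_le (m := ((n + 1 : ℕ) : WithTop ℕ∞)) (by exact_mod_cast le_top)).neg).contDiffAt
    rw [heq, iteratedFDeriv_const_of_ne (Nat.succ_ne_zero n)]
    have hneg : iteratedFDeriv ℝ (n + 1) (fun z => -χt z) x
        = -iteratedFDeriv ℝ (n + 1) χt x := iteratedFDeriv_neg_apply
    rw [hneg]
    simpa using hM x

lemma main_rep (m ε : ℝ) (a : ℕ → Vec d → Vec d → ℂ) (ha : SymbClass d m a)
    (χ χt : Vec d → ℝ)
    (hχ : ContDiff ℝ (⊤ : ℕ∞) χ) (hχc : HasCompactSupport χ)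
    (hχt : ContDiff ℝ (⊤ : ℕ∞) χt) (hχtc : HasCompactSupport χt)
    (hχt01 : ∀ x, 0 ≤ χt x ∧ χt x ≤ 1) :
    ∀ α β : Fin d → ℕ, ∃ T : List (TD d), (∀ t ∈ T, OKt χ χt α β t) ∧
      ∀ k, mpd α β
          (fun x y => ((1 - χt (ck ε k • x) : ℝ) : ℂ) * a k x y * ((χ (ck ε k • y) : ℝ) : ℂ))
        = fun x y => (T.map (fun t => rl ε a t k x y)).sum := by
  have hak := ha.1
  suffices H : ∀ n (α β : Fin d → ℕ), (∑ j, α j) + (∑ j, β j) = n →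
      ∃ T : List (TD d), (∀ t ∈ T, OKt χ χt α β t) ∧
      ∀ k, mpd α β
          (fun x y => ((1 - χt (ck ε k • x) : ℝ) : ℂ) * a k x y * ((χ (ck ε k • y) : ℝ) : ℂ))
        = fun x y => (T.map (fun t => rl ε a t k x y)).sum by
    intro α β; exact H _ α β rfl
  intro n
  induction n using Nat.strong_induction_on with
  | _ n IH =>
  intro α β hn
  by_cases hα : α = 0
  · subst hα
    by_cases hβ : β = 0
    · subst hβ
      refine ⟨[⟨0, fun z => 1 - χt z, χ, 0, 0⟩], ?_, ?_⟩
      · intro t ht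
        simp only [List.mem_singleton] at ht
        subst ht
        refine ⟨⟨contDiff_const.sub hχt, subset_rfl, bddDerivs_one_sub χt hχt hχtc hχt01⟩,
          ⟨hχ, subset_rfl, bddDerivs_of_compact_support χ hχ hχc⟩, le_rfl, le_rfl⟩
      · intro k
        rw [mpd_zero_zero]
        funext x y
        simp only [rl, List.map_cons, List.map_nil, List.sum_cons, List.sum_nil, add_zero,
          mpd_zero_zero]
        push_cast
        ring
    · obtain ⟨i, hi0, hilt⟩ := exists_least β hβ
      set β' := Function.update β i (β i - 1) with hβ'
      have hupd := update_sub_add β i hi0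
      have hβ'lt : ∀ j, j < i → β' j = 0 := by
        intro j hj
        rw [hβ', Function.update_of_ne (ne_of_lt hj)]
        exact hilt j hj
      have hsum : (∑ j, (0 : Fin d → ℕ) j) + ((∑ j, β' j)) + 1 = n := by
        simp only [Pi.zero_apply, Finset.sum_const_zero, zero_add] at hn ⊢
        rw [← hn]
        have h2 := sum_update_sub β i hi0
        rw [← hβ'] at h2
        exact h2
      obtain ⟨T', hT'v, hT'⟩ := IH (n - 1) (by omega) 0 β' (by omega)
      obtain ⟨T, hTv, hT⟩ := stepY χ χt ε a hak i β' hβ'lt T' hT'v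
      refine ⟨T, ?_, ?_⟩
      · intro t ht
        have := hTv t ht
        rwa [hupd] at this
      · intro k
        have h1 : mpd 0 β
            (fun x y => ((1 - χt (ck ε k • x) : ℝ) : ℂ) * a k x y * ((χ (ck ε k • y) : ℝ) : ℂ))
            = pdY i (mpd 0 β'
              (fun x y => ((1 - χt (ck ε k • x) : ℝ) : ℂ) * a k x y * ((χ (ck ε k • y) : ℝ) : ℂ))) := by
          conv_lhs => rw [← hupd]
          exact mpd_succY β' i hβ'lt _
        rw [h1, hT' k]
        funext x y
        exact hT k x y
  · obtain ⟨i, hi0, hilt⟩ := exists_least α hα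
    set α' := Function.update α i (α i - 1) with hα'
    have hupd := update_sub_add α i hi0
    have hα'lt : ∀ j, j < i → α' j = 0 := by
      intro j hj
      rw [hα', Function.update_of_ne (ne_of_lt hj)]
      exact hilt j hj
    have hsum : ((∑ j, α' j) + (∑ j, β j)) + 1 = n := by
      rw [← hn]
      have h2 := sum_update_sub α i hi0
      rw [← hα'] at h2
      omega
    obtain ⟨T', hT'v, hT'⟩ := IH (n - 1) (by omega) α' β (by omega)
    obtain ⟨T, hTv, hT⟩ := stepX χ χt ε a hak i α' β hα'lt T' hT'v
    refine ⟨T, ?_, ?_⟩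
    · intro t ht
      have := hTv t ht
      rwa [hupd] at this
    · intro k
      have h1 : mpd α β
          (fun x y => ((1 - χt (ck ε k • x) : ℝ) : ℂ) * a k x y * ((χ (ck ε k • y) : ℝ) : ℂ))
          = pdX i (mpd α' β
            (fun x y => ((1 - χt (ck ε k • x) : ℝ) : ℂ) * a k x y * ((χ (ck ε k • y) : ℝ) : ℂ))) := by
        conv_lhs => rw [← hupd]
        exact mpd_succX α' β i hα'lt _
      rw [h1, hT' k]
      funext x y
      exact hT k x y

end mainrep
section estimate
variable {d : ℕ}

lemma term_bound (m ε : ℝ) (hε0 : 0 < ε) (hε : ε ≤ 1 / 2)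
    (a : ℕ → Vec d → Vec d → ℂ) (ha : SymbClass d m a)
    (χ χt : Vec d → ℝ)
    (hdist : ∃ δ : ℝ, 0 < δ ∧
      ∀ x ∈ tsupport (fun z => 1 - χt z), ∀ y ∈ tsupport χ, δ ≤ dist x y)
    (R : ℝ) (hR : 0 < R)
    (t : TD d) (hgp : GP χt t.g) (hhp : HP χ t.h) (N : ℕ) :
    ∃ C : ℝ, 0 < C ∧ ∃ k₀ : ℕ, ∀ k, k₀ ≤ k → ∀ x y : Vec d, ‖x‖ ≤ R → ‖y‖ ≤ R →
      ‖rl ε a t k x y‖ ≤ C * (k : ℝ) ^ (-(N : ℝ)) := by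
  obtain ⟨δ, hδ, hsep⟩ := hdist
  obtain ⟨M₀, hM₀⟩ := hgp.2.2 0
  obtain ⟨M₁, hM₁⟩ := hhp.2.2 0
  have hMg : ∀ z, |t.g z| ≤ max M₀ 1 := fun z => by
    have := hM₀ z
    rw [norm_iteratedFDeriv_zero, Real.norm_eq_abs] at this
    exact this.trans (le_max_left _ _)
  have hMh : ∀ z, |t.h z| ≤ max M₁ 1 := fun z => by
    have := hM₁ z
    rw [norm_iteratedFDeriv_zero, Real.norm_eq_abs] at this
    exact this.trans (le_max_left _ _)
  obtain ⟨l, k₁, hsymb⟩ := ha.2 t.A t.B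
  set n' : ℕ := (∑ i, t.A i) + (∑ i, t.B i) with hn'
  set N' : ℝ := max 1 ((N + |m| + ((n' : ℝ) + l + t.j) / 2 + 1) / ε) with hN'
  have hN'pos : (0 : ℝ) < N' := lt_of_lt_of_le one_pos (le_max_left _ _)
  obtain ⟨Ca, hCa, hbound⟩ := hsymb N' hN'pos
  refine ⟨8 ^ t.j * (max M₀ 1) * (max M₁ 1) * Ca * (1 + 2 * R) ^ l / (δ / 8) ^ N',
    by positivity, max k₁ 1, ?_⟩
  intro k hk x y hx hy
  have hk1 : (1 : ℝ) ≤ (k : ℝ) := by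
    have : (1 : ℕ) ≤ k := le_trans (le_max_right k₁ 1) hk
    exact_mod_cast this
  have hkpos : (0 : ℝ) < (k : ℝ) := lt_of_lt_of_le one_pos hk1
  have hkk₁ : k₁ ≤ k := le_trans (le_max_left k₁ 1) hk
  set P : ℝ := (k : ℝ) with hP
  have hckpos : 0 < ck ε k := by
    unfold ck
    positivity
  by_cases hz : t.g (ck ε k • x) = 0 ∨ t.h (ck ε k • y) = 0
  · have : rl ε a t k x y = 0 := by
      unfold rl
      rcases hz with hz | hz <;> rw [hz] <;> simp
    rw [this, norm_zero]
    positivity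
  · push_neg at hz
    have hxs : ck ε k • x ∈ tsupport (fun z => 1 - χt z) :=
      hgp.2.1 (subset_closure (by simpa [Function.mem_support] using hz.1))
    have hys : ck ε k • y ∈ tsupport χ :=
      hhp.2.1 (subset_closure (by simpa [Function.mem_support] using hz.2))
    have hsep' : δ ≤ ck ε k * ‖x - y‖ := by
      have h1 := hsep _ hxs _ hys
      rwa [dist_eq_norm, ← smul_sub, norm_smul, Real.norm_eq_abs,
        abs_of_pos hckpos] at h1
    -- basic sqrt facts
    have hs_eq : Real.sqrt (k : ℝ) = P ^ ((1 : ℝ) / 2) := Real.sqrt_eq_rpow P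
    have hs1 : (1 : ℝ) ≤ Real.sqrt (k : ℝ) := by
      rw [show (1 : ℝ) = Real.sqrt 1 by simp]
      exact Real.sqrt_le_sqrt hk1
    have hspos : (0 : ℝ) < Real.sqrt (k : ℝ) := lt_of_lt_of_le one_pos hs1
    -- E1
    have E1 : (ck ε k) ^ t.j ≤ 8 ^ t.j * P ^ ((t.j : ℝ) / 2) := by
      have h1 : ck ε k ≤ 8 * P ^ ((1 : ℝ) / 2) := by
        unfold ck
        have := Real.rpow_le_rpow_of_exponent_le hk1 (by linarith : (1:ℝ)/2 - ε ≤ 1/2)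
        linarith
      calc (ck ε k) ^ t.j ≤ (8 * P ^ ((1 : ℝ) / 2)) ^ t.j :=
            pow_le_pow_left₀ hckpos.le h1 t.j
        _ = 8 ^ t.j * (P ^ ((1 : ℝ) / 2)) ^ t.j := mul_pow _ _ _
        _ = 8 ^ t.j * P ^ ((t.j : ℝ) / 2) := by
            rw [← Real.rpow_natCast (P ^ ((1 : ℝ) / 2)) t.j, ← Real.rpow_mul hkpos.le]
            ring_nf
    -- E2
    have E2 : (1 + Real.sqrt k * ‖x‖ + Real.sqrt k * ‖y‖) ^ l
        ≤ (1 + 2 * R) ^ l * P ^ ((l : ℝ) / 2) := by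
      have hb : 1 + Real.sqrt k * ‖x‖ + Real.sqrt k * ‖y‖ ≤ (1 + 2 * R) * Real.sqrt k := by
        have h1 : Real.sqrt k * ‖x‖ ≤ Real.sqrt k * R :=
          mul_le_mul_of_nonneg_left hx hspos.le
        have h2 : Real.sqrt k * ‖y‖ ≤ Real.sqrt k * R :=
          mul_le_mul_of_nonneg_left hy hspos.le
        nlinarith
      calc (1 + Real.sqrt k * ‖x‖ + Real.sqrt k * ‖y‖) ^ l
          ≤ ((1 + 2 * R) * Real.sqrt k) ^ l := pow_le_pow_left₀ (by positivity) hb l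
        _ = (1 + 2 * R) ^ l * (Real.sqrt k) ^ l := mul_pow _ _ _
        _ = (1 + 2 * R) ^ l * P ^ ((l : ℝ) / 2) := by
            rw [hs_eq, ← Real.rpow_natCast (P ^ ((1 : ℝ) / 2)) l, ← Real.rpow_mul hkpos.le]
            ring_nf
    -- E3 / E4
    have E3 : δ / 8 * P ^ ε ≤ 1 + Real.sqrt k * ‖x - y‖ := by
      have hsplit : P ^ ((1 : ℝ) / 2) = P ^ ((1 : ℝ) / 2 - ε) * P ^ ε := by
        rw [← Real.rpow_add hkpos]
        ring_nf
      have h1 : Real.sqrt k * ‖x - y‖ = P ^ ε / 8 * (ck ε k * ‖x - y‖) := by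
        rw [hs_eq, hsplit]
        unfold ck
        ring
      have h2 : P ^ ε / 8 * δ ≤ P ^ ε / 8 * (ck ε k * ‖x - y‖) :=
        mul_le_mul_of_nonneg_left hsep' (by positivity)
      rw [← h1] at h2
      linarith [h2]
    have E4 : (δ / 8) ^ N' * P ^ (ε * N') ≤ (1 + Real.sqrt k * ‖x - y‖) ^ N' := by
      have h1 := Real.rpow_le_rpow (by positivity) E3 hN'pos.le
      rwa [Real.mul_rpow (by positivity) (by positivity), ← Real.rpow_mul hkpos.le] at h1
    -- symbol bound
    have E5 := hbound k hkk₁ x y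
    -- put together
    have hnorm : ‖rl ε a t k x y‖ = (ck ε k) ^ t.j * |t.g (ck ε k • x)| *
        |t.h (ck ε k • y)| * ‖mpd t.A t.B (a k) x y‖ := by
      simp only [rl, norm_mul, Complex.norm_real, Real.norm_eq_abs]
      rw [abs_of_nonneg (by positivity : (0:ℝ) ≤ ck ε k ^ t.j)]
    have step2 : ‖rl ε a t k x y‖ ≤ (ck ε k) ^ t.j * (max M₀ 1) * (max M₁ 1) *
        (Ca * P ^ (m + (n' : ℝ) / 2) *
          (1 + Real.sqrt k * ‖x‖ + Real.sqrt k * ‖y‖) ^ l /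
          (1 + Real.sqrt k * ‖x - y‖) ^ N') := by
      rw [hnorm]
      gcongr
      all_goals first
        | exact hMg _
        | exact hMh _
        | exact E5
    have step3 : ‖rl ε a t k x y‖ ≤ (8 ^ t.j * P ^ ((t.j : ℝ) / 2)) * (max M₀ 1) * (max M₁ 1) *
        (Ca * P ^ (m + (n' : ℝ) / 2) *
          ((1 + 2 * R) ^ l * P ^ ((l : ℝ) / 2)) /
          ((δ / 8) ^ N' * P ^ (ε * N'))) := by
      refine step2.trans ?_
      gcongr
      all_goals first
        | exact E1
        | exact E2
        | exact E4
    refine step3.trans ?_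
    have hexp : (t.j : ℝ) / 2 + (m + (n' : ℝ) / 2) + ((l : ℝ) / 2 - ε * N') ≤ -(N : ℝ) := by
      have hQ : (0:ℝ) < N + |m| + ((n' : ℝ) + l + t.j) / 2 + 1 := by positivity
      have h1 : (N + |m| + ((n' : ℝ) + l + t.j) / 2 + 1) ≤ ε * N' := by
        calc (N + |m| + ((n' : ℝ) + l + t.j) / 2 + 1)
            = ε * ((N + |m| + ((n' : ℝ) + l + t.j) / 2 + 1) / ε) := by
              field_simp
          _ ≤ ε * N' := mul_le_mul_of_nonneg_left (le_max_right _ _) hε0.le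
      have hm : m ≤ |m| := le_abs_self m
      linarith
    have hcomb : P ^ ((t.j : ℝ) / 2) * (P ^ (m + (n' : ℝ) / 2) * P ^ ((l : ℝ) / 2 - ε * N'))
        = P ^ ((t.j : ℝ) / 2 + (m + (n' : ℝ) / 2) + ((l : ℝ) / 2 - ε * N')) := by
      rw [← Real.rpow_add hkpos, ← Real.rpow_add hkpos]
      ring_nf
    have hsub : P ^ ((l : ℝ) / 2 - ε * N') = P ^ ((l : ℝ) / 2) / P ^ (ε * N') :=
      Real.rpow_sub hkpos _ _
    have hδ8 : ((δ / 8) ^ N' : ℝ) ≠ 0 := by positivity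
    have hPε : (P ^ (ε * N') : ℝ) ≠ 0 := by positivity
    calc (8 ^ t.j * P ^ ((t.j : ℝ) / 2)) * (max M₀ 1) * (max M₁ 1) *
        (Ca * P ^ (m + (n' : ℝ) / 2) *
          ((1 + 2 * R) ^ l * P ^ ((l : ℝ) / 2)) /
          ((δ / 8) ^ N' * P ^ (ε * N')))
        = (8 ^ t.j * (max M₀ 1) * (max M₁ 1) * Ca * (1 + 2 * R) ^ l / (δ / 8) ^ N') *
          (P ^ ((t.j : ℝ) / 2) * (P ^ (m + (n' : ℝ) / 2) * P ^ ((l : ℝ) / 2 - ε * N'))) := by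
          rw [hsub]
          field_simp
      _ = (8 ^ t.j * (max M₀ 1) * (max M₁ 1) * Ca * (1 + 2 * R) ^ l / (δ / 8) ^ N') *
          P ^ ((t.j : ℝ) / 2 + (m + (n' : ℝ) / 2) + ((l : ℝ) / 2 - ε * N')) := by rw [hcomb]
      _ ≤ (8 ^ t.j * (max M₀ 1) * (max M₁ 1) * Ca * (1 + 2 * R) ^ l / (δ / 8) ^ N') *
          P ^ (-(N : ℝ)) := by
          apply mul_le_mul_of_nonneg_left _ (by positivity)
          exact Real.rpow_le_rpow_of_exponent_le hk1 hexp

lemma sum_bound (ε : ℝ) (a : ℕ → Vec d → Vec d → ℂ) (K : Set (Vec d × Vec d)) (N : ℕ) :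
    ∀ T : List (TD d),
      (∀ t ∈ T, ∃ C : ℝ, 0 < C ∧ ∃ k₀ : ℕ, ∀ k, k₀ ≤ k → ∀ p ∈ K,
        ‖rl ε a t k p.1 p.2‖ ≤ C * (k : ℝ) ^ (-(N : ℝ))) →
      ∃ C : ℝ, 0 < C ∧ ∃ k₀ : ℕ, ∀ k, k₀ ≤ k → ∀ p ∈ K,
        ‖(T.map (fun t => rl ε a t k p.1 p.2)).sum‖ ≤ C * (k : ℝ) ^ (-(N : ℝ)) := by
  intro T
  induction T with
  | nil =>
    intro _
    refine ⟨1, one_pos, 1, fun k hk p _ => ?_⟩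
    have hkpos : (0:ℝ) < (k:ℝ) := by exact_mod_cast Nat.lt_of_lt_of_le Nat.zero_lt_one hk
    simp only [List.map_nil, List.sum_nil, norm_zero]
    positivity
  | cons t ts ih =>
    intro hv
    obtain ⟨C1, hC1, k1, h1⟩ := hv t List.mem_cons_self
    obtain ⟨C2, hC2, k2, h2⟩ := ih (fun u hu => hv u (List.mem_cons_of_mem t hu))
    refine ⟨C1 + C2, by positivity, max k1 k2, fun k hk p hp => ?_⟩
    simp only [List.map_cons, List.sum_cons]
    calc ‖rl ε a t k p.1 p.2 + (ts.map (fun u => rl ε a u k p.1 p.2)).sum‖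
        ≤ ‖rl ε a t k p.1 p.2‖ + ‖(ts.map (fun u => rl ε a u k p.1 p.2)).sum‖ :=
          norm_add_le _ _
      _ ≤ C1 * (k : ℝ) ^ (-(N : ℝ)) + C2 * (k : ℝ) ^ (-(N : ℝ)) :=
          add_le_add (h1 k (le_trans (le_max_left _ _) hk) p hp)
            (h2 k (le_trans (le_max_right _ _) hk) p hp)
      _ = (C1 + C2) * (k : ℝ) ^ (-(N : ℝ)) := by ring

end estimate

/-- Off-diagonal negligibility: let `a ∈ Ŝ^m(ℝ^d × ℝ^d)`, `ε ∈ (0,1/2]`, and let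
`χ, χ̃ ∈ C_c^∞(ℝ^d;[0,1])` with `supp χ ⊆ {|y| ≤ 1}` and `dist(supp(1−χ̃), supp χ) > 0`.
Set `χ_k(y) := χ(8k^{1/2−ε}y)` and `χ̃_k(x) := χ̃(8k^{1/2−ε}x)`. Then for every compact
`K ⊆ ℝ^d × ℝ^d`, all multi-indices `α, β` and every `N ∈ ℕ` there are `C > 0` and `k₀` such
that for all `k ≥ k₀`,
`sup_{(x,y)∈K} |∂_x^α ∂_y^β [(1−χ̃_k(x))·a(x,y,k)·χ_k(y)]| ≤ C k^{−N}`. -/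
theorem stmt15 (d : ℕ) (m : ℝ) (ε : ℝ) (hε0 : 0 < ε) (hε : ε ≤ 1 / 2)
    (a : ℕ → Vec d → Vec d → ℂ) (ha : SymbClass d m a)
    (χ χt : Vec d → ℝ)
    (hχ : ContDiff ℝ (⊤ : ℕ∞) χ) (hχc : HasCompactSupport χ)
    (hχt : ContDiff ℝ (⊤ : ℕ∞) χt) (hχtc : HasCompactSupport χt)
    (hχ01 : ∀ y, 0 ≤ χ y ∧ χ y ≤ 1) (hχt01 : ∀ x, 0 ≤ χt x ∧ χt x ≤ 1)
    (hχball : tsupport χ ⊆ Metric.closedBall 0 1)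
    (hdist : ∃ δ : ℝ, 0 < δ ∧
      ∀ x ∈ tsupport (fun z => 1 - χt z), ∀ y ∈ tsupport χ, δ ≤ dist x y) :
    ∀ K : Set (Vec d × Vec d), IsCompact K → ∀ α β : Fin d → ℕ, ∀ N : ℕ,
      ∃ C : ℝ, 0 < C ∧ ∃ k₀ : ℕ, ∀ k, k₀ ≤ k → ∀ p ∈ K,
        ‖mpd α β
            (fun x y =>
              ((1 - χt ((8 * (k : ℝ) ^ ((1 : ℝ) / 2 - ε)) • x) : ℝ) : ℂ) * a k x y *
                ((χ ((8 * (k : ℝ) ^ ((1 : ℝ) / 2 - ε)) • y) : ℝ) : ℂ))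
            p.1 p.2‖ ≤ C * (k : ℝ) ^ (-(N : ℝ)) := by
  intro K hK α β N
  obtain ⟨r, hr⟩ := hK.isBounded.subset_closedBall 0
  set R := max r 1 with hRdef
  have hRpos : (0 : ℝ) < R := lt_of_lt_of_le one_pos (le_max_right _ _)
  have hKR : ∀ p ∈ K, ‖p.1‖ ≤ R ∧ ‖p.2‖ ≤ R := by
    intro p hp
    have h1 := hr hp
    rw [Metric.mem_closedBall, dist_zero_right] at h1
    exact ⟨le_trans (norm_fst_le p) (le_trans h1 (le_max_left _ _)),
      le_trans (norm_snd_le p) (le_trans h1 (le_max_left _ _))⟩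
  obtain ⟨T, hTv, hTeq⟩ := main_rep m ε a ha χ χt hχ hχc hχt hχtc hχt01 α β
  have hterm : ∀ t ∈ T, ∃ C : ℝ, 0 < C ∧ ∃ k₀ : ℕ, ∀ k, k₀ ≤ k → ∀ p ∈ K,
      ‖rl ε a t k p.1 p.2‖ ≤ C * (k : ℝ) ^ (-(N : ℝ)) := by
    intro t ht
    obtain ⟨C, hC, k₀, hb⟩ := term_bound m ε hε0 hε a ha χ χt hdist R hRpos t
      (hTv t ht).1 (hTv t ht).2.1 N
    exact ⟨C, hC, k₀, fun k hk p hp => hb k hk p.1 p.2 (hKR p hp).1 (hKR p hp).2⟩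
  obtain ⟨C, hC, k₀, hs⟩ := sum_bound ε a K N T hterm
  refine ⟨C, hC, k₀, fun k hk p hp => ?_⟩
  have hgoal : (fun x y : Vec d =>
      ((1 - χt ((8 * (k : ℝ) ^ ((1 : ℝ) / 2 - ε)) • x) : ℝ) : ℂ) * a k x y *
        ((χ ((8 * (k : ℝ) ^ ((1 : ℝ) / 2 - ε)) • y) : ℝ) : ℂ))
      = fun x y => ((1 - χt (ck ε k • x) : ℝ) : ℂ) * a k x y * ((χ (ck ε k • y) : ℝ) : ℂ) := rfl
  rw [hgoal, hTeq k]
  exact hs k hk p hp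
end
end

section
/- Let H₀, H₁, H₂ be complex Hilbert spaces, and let S₀ : H₀ →ₚ H₁ and S₁ : H₁ →ₚ H₂ be densely defined unbounded linear operators with adjoints S₀† and S₁†, such that S₀x ∈ dom S₁ and S₁(S₀x) = 0 for every x ∈ dom S₀. Let c > 0 and let α ∈ dom S₁ with S₁α = 0. Suppose β ∈ H₁ satisfies: β ∈ dom S₀†, S₀†β ∈ dom S₀, β ∈ dom S₁, S₁β ∈ dom S₁†, S₀(S₀†β) + S₁†(S₁β) = α, and Re⟨β, α⟩ ≤ ‖α‖²/c. Then u := S₀†β satisfies S₀u = α and ‖u‖ ≤ c^{−1/2} ‖α‖. -/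
/-- Abstract `L²`-existence theorem for the deformed Cauchy–Riemann operator: let
`S₀ : H₀ →ₚ H₁`, `S₁ : H₁ →ₚ H₂` be densely defined operators between complex Hilbert spaces
with `S₁ ∘ S₀ = 0`, let `c > 0`, let `α ∈ dom S₁` with `S₁α = 0`, and suppose `β` satisfies
`β ∈ dom S₀†`, `S₀†β ∈ dom S₀`, `β ∈ dom S₁`, `S₁β ∈ dom S₁†`,
`S₀(S₀†β) + S₁†(S₁β) = α`, and `Re⟨β,α⟩ ≤ ‖α‖²/c`. Then `u := S₀†β` solves `S₀u = α` and
`‖u‖ ≤ c^{−1/2}‖α‖`. -/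
theorem stmt17 {H₀ H₁ H₂ : Type*}
    [NormedAddCommGroup H₀] [InnerProductSpace ℂ H₀] [CompleteSpace H₀]
    [NormedAddCommGroup H₁] [InnerProductSpace ℂ H₁] [CompleteSpace H₁]
    [NormedAddCommGroup H₂] [InnerProductSpace ℂ H₂] [CompleteSpace H₂]
    (S₀ : H₀ →ₗ.[ℂ] H₁) (S₁ : H₁ →ₗ.[ℂ] H₂)
    (hS₀ : Dense (S₀.domain : Set H₀)) (hS₁ : Dense (S₁.domain : Set H₁))
    (hcomp : ∀ x : S₀.domain, ∃ h : (S₀ x : H₁) ∈ S₁.domain, S₁ ⟨S₀ x, h⟩ = 0)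
    (c : ℝ) (hc : 0 < c)
    (α : H₁) (hα : α ∈ S₁.domain) (hαclosed : S₁ ⟨α, hα⟩ = 0)
    (β : H₁) (hβ : β ∈ S₀.adjoint.domain)
    (hβ₀ : S₀.adjoint ⟨β, hβ⟩ ∈ S₀.domain)
    (hβ₁ : β ∈ S₁.domain)
    (hβ₂ : S₁ ⟨β, hβ₁⟩ ∈ S₁.adjoint.domain)
    (hlap : S₀ ⟨S₀.adjoint ⟨β, hβ⟩, hβ₀⟩ + S₁.adjoint ⟨S₁ ⟨β, hβ₁⟩, hβ₂⟩ = α)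
    (hbound : (inner ℂ β α : ℂ).re ≤ ‖α‖ ^ 2 / c) :
    S₀ ⟨S₀.adjoint ⟨β, hβ⟩, hβ₀⟩ = α ∧
      ‖S₀.adjoint ⟨β, hβ⟩‖ ≤ c ^ (-(1 : ℝ) / 2) * ‖α‖ := by
  obtain ⟨hmem, hzero⟩ := hcomp ⟨S₀.adjoint ⟨β, hβ⟩, hβ₀⟩
  set u : H₁ := S₀ ⟨S₀.adjoint ⟨β, hβ⟩, hβ₀⟩ with hu
  set v : H₁ := S₁.adjoint ⟨S₁ ⟨β, hβ₁⟩, hβ₂⟩ with hv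
  have hfa₀ := LinearPMap.adjoint_isFormalAdjoint hS₀
  have hfa₁ := LinearPMap.adjoint_isFormalAdjoint hS₁
  -- ⟪v, α⟫ = 0
  have h1 : (inner ℂ v α : ℂ) = 0 := by
    have := hfa₁ ⟨S₁ ⟨β, hβ₁⟩, hβ₂⟩ ⟨α, hα⟩
    simpa [hαclosed] using this
  -- ⟪v, u⟫ = 0
  have h2 : (inner ℂ v u : ℂ) = 0 := by
    have := hfa₁ ⟨S₁ ⟨β, hβ₁⟩, hβ₂⟩ ⟨u, hmem⟩
    simpa [show S₁ ⟨u, hmem⟩ = 0 from hzero] using this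
  have hv0 : v = 0 := by
    have hvv : (inner ℂ v v : ℂ) = 0 := by
      have : v = α - u := eq_sub_of_add_eq' hlap
      calc (inner ℂ v v : ℂ) = inner ℂ v α - inner ℂ v u := by
            rw [this, inner_sub_right]
        _ = 0 := by rw [h1, h2, sub_zero]
    exact inner_self_eq_zero.mp hvv
  have hSu : u = α := by simpa [hv0] using hlap
  refine ⟨hSu, ?_⟩
  -- norm bound
  have hnorm : ‖S₀.adjoint ⟨β, hβ⟩‖ ^ 2 ≤ ‖α‖ ^ 2 / c := by
    have h3 := hfa₀ ⟨β, hβ⟩ ⟨S₀.adjoint ⟨β, hβ⟩, hβ₀⟩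
    rw [← hu, hSu] at h3
    have : ‖S₀.adjoint ⟨β, hβ⟩‖ ^ 2 = (inner ℂ β α : ℂ).re := by
      rw [← h3]
      exact (inner_self_eq_norm_sq (𝕜 := ℂ) _).symm
    linarith
  have hα2 : ‖α‖ ^ 2 / c = (c ^ (-(1:ℝ) / 2) * ‖α‖) ^ 2 := by
    rw [mul_pow, ← Real.rpow_natCast (c ^ (-(1:ℝ)/2)) 2, ← Real.rpow_mul hc.le]
    norm_num
    rw [Real.rpow_neg_one]
    ring
  rw [hα2] at hnorm
  have hM : (0:ℝ) ≤ c ^ (-(1:ℝ) / 2) * ‖α‖ := by positivity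
  nlinarith [norm_nonneg (S₀.adjoint ⟨β, hβ⟩)]
end

section
/- Let H₀, H₁, H₂ be complex Hilbert spaces, S₀ : H₀ →ₚ H₁ a densely defined closed unbounded linear operator (so that ker S₀ is a closed subspace of H₀), and S₁ : H₁ →ₚ H₂ a densely defined unbounded linear operator, such that S₀x ∈ dom S₁ and S₁(S₀x) = 0 for every x ∈ dom S₀. Let u ∈ dom S₀ and suppose β ∈ H₁ satisfies: β ∈ dom S₀†, S₀†β ∈ dom S₀, β ∈ dom S₁, S₁β ∈ dom S₁†, and S₀(S₀†β) + S₁†(S₁β) = S₀u. Then u − S₀†β ∈ ker S₀, S₀†β is orthogonal to ker S₀, and u − S₀†β equals the orthogonal projection of u onto the closed subspace ker S₀. -/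
/-- Abstract Hodge-type decomposition for the Bergman projection: let `S₀ : H₀ →ₚ H₁` be a
densely defined closed operator (so that `ker S₀` is closed) and `S₁ : H₁ →ₚ H₂` a densely
defined operator with `S₁ ∘ S₀ = 0`. Let `u ∈ dom S₀` and suppose `β` satisfies `β ∈ dom S₀†`,
`S₀†β ∈ dom S₀`, `β ∈ dom S₁`, `S₁β ∈ dom S₁†`, and `S₀(S₀†β) + S₁†(S₁β) = S₀u`. Then
`u − S₀†β ∈ ker S₀`, `S₀†β ⟂ ker S₀`, and `u − S₀†β` is the orthogonal projection of `u`
onto the closed subspace `ker S₀` (equivalently, the point of `ker S₀` closest to `u`). -/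
theorem stmt19 {H₀ H₁ H₂ : Type*}
    [NormedAddCommGroup H₀] [InnerProductSpace ℂ H₀] [CompleteSpace H₀]
    [NormedAddCommGroup H₁] [InnerProductSpace ℂ H₁] [CompleteSpace H₁]
    [NormedAddCommGroup H₂] [InnerProductSpace ℂ H₂] [CompleteSpace H₂]
    (S₀ : H₀ →ₗ.[ℂ] H₁) (S₁ : H₁ →ₗ.[ℂ] H₂)
    (hS₀ : Dense (S₀.domain : Set H₀)) (hS₁ : Dense (S₁.domain : Set H₁))
    (hS₀closed : S₀.IsClosed)
    (hcomp : ∀ x : S₀.domain, ∃ h : (S₀ x : H₁) ∈ S₁.domain, S₁ ⟨S₀ x, h⟩ = 0)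
    (u : H₀) (hu : u ∈ S₀.domain)
    (β : H₁) (hβ : β ∈ S₀.adjoint.domain)
    (hβ₀ : S₀.adjoint ⟨β, hβ⟩ ∈ S₀.domain)
    (hβ₁ : β ∈ S₁.domain)
    (hβ₂ : S₁ ⟨β, hβ₁⟩ ∈ S₁.adjoint.domain)
    (hlap : S₀ ⟨S₀.adjoint ⟨β, hβ⟩, hβ₀⟩ + S₁.adjoint ⟨S₁ ⟨β, hβ₁⟩, hβ₂⟩ =
      S₀ ⟨u, hu⟩) :
    IsClosed {x : H₀ | ∃ hx : x ∈ S₀.domain, S₀ ⟨x, hx⟩ = 0} ∧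
    (∃ h : u - S₀.adjoint ⟨β, hβ⟩ ∈ S₀.domain,
      S₀ ⟨u - S₀.adjoint ⟨β, hβ⟩, h⟩ = 0) ∧
    (∀ w : H₀, ∀ hw : w ∈ S₀.domain, S₀ ⟨w, hw⟩ = 0 →
      (inner ℂ (S₀.adjoint ⟨β, hβ⟩) w : ℂ) = 0) ∧
    ∀ v : H₀, (∃ hv : v ∈ S₀.domain, S₀ ⟨v, hv⟩ = 0) →
      ‖u - (u - S₀.adjoint ⟨β, hβ⟩)‖ ≤ ‖u - v‖ := by
  set b : H₀ := S₀.adjoint ⟨β, hβ⟩ with hbdef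
  -- kernel is closed
  have hker : IsClosed {x : H₀ | ∃ hx : x ∈ S₀.domain, S₀ ⟨x, hx⟩ = 0} := by
    have : {x : H₀ | ∃ hx : x ∈ S₀.domain, S₀ ⟨x, hx⟩ = 0} =
        (fun x : H₀ => (x, (0 : H₁))) ⁻¹' (S₀.graph : Set (H₀ × H₁)) := by
      ext x
      simp only [Set.mem_setOf_eq, Set.mem_preimage, SetLike.mem_coe,
        LinearPMap.mem_graph_iff]
      constructor
      · rintro ⟨hx, h0⟩; exact ⟨⟨x, hx⟩, rfl, h0⟩
      · rintro ⟨⟨y, hy⟩, hy1, hy2⟩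
        exact ⟨hy1 ▸ hy, by simpa [← hy1] using hy2⟩
    rw [this]
    exact hS₀closed.preimage (Continuous.prodMk_left 0)
  have hadj := S₀.adjoint_isFormalAdjoint hS₀
  have hadj₁ := S₁.adjoint_isFormalAdjoint hS₁
  -- orthogonality of b to ker S₀
  have horth : ∀ w : H₀, ∀ hw : w ∈ S₀.domain, S₀ ⟨w, hw⟩ = 0 →
      (inner ℂ b w : ℂ) = 0 := by
    intro w hw hw0
    have := hadj ⟨β, hβ⟩ ⟨w, hw⟩
    rw [hw0] at this
    simpa using this
  -- membership in kernel
  have hmemdom : u - b ∈ S₀.domain := S₀.domain.sub_mem hu hβ₀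
  have hSsub : S₀ ⟨u - b, hmemdom⟩ = S₀ ⟨u, hu⟩ - S₀ ⟨b, hβ₀⟩ := by
    have : (⟨u - b, hmemdom⟩ : S₀.domain) = ⟨u, hu⟩ - ⟨b, hβ₀⟩ := rfl
    rw [this, LinearPMap.map_sub]
  have hkey : S₀ ⟨u - b, hmemdom⟩ = S₁.adjoint ⟨S₁ ⟨β, hβ₁⟩, hβ₂⟩ := by
    rw [hSsub, ← hlap]; abel
  have hzero : S₀ ⟨u - b, hmemdom⟩ = 0 := by
    obtain ⟨hd, hc⟩ := hcomp ⟨u - b, hmemdom⟩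
    set w : H₁ := S₀ ⟨u - b, hmemdom⟩ with hwdef
    have h1 : (inner ℂ (S₁.adjoint ⟨S₁ ⟨β, hβ₁⟩, hβ₂⟩) w : ℂ) = 0 := by
      have := hadj₁ ⟨S₁ ⟨β, hβ₁⟩, hβ₂⟩ ⟨w, hd⟩
      rw [hc] at this
      simpa using this
    rw [← hkey] at h1
    exact inner_self_eq_zero.mp h1
  refine ⟨hker, ⟨hmemdom, hzero⟩, horth, ?_⟩
  intro v hv
  obtain ⟨hvdom, hv0⟩ := hv
  have hsub : u - (u - b) = b := by abel
  rw [hsub]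
  have hdiff : u - b - v ∈ S₀.domain := S₀.domain.sub_mem hmemdom hvdom
  have hdiff0 : S₀ ⟨u - b - v, hdiff⟩ = 0 := by
    have : (⟨u - b - v, hdiff⟩ : S₀.domain) = ⟨u - b, hmemdom⟩ - ⟨v, hvdom⟩ := rfl
    rw [this, LinearPMap.map_sub, hzero, hv0, sub_zero]
  have hperp : (inner ℂ b (u - b - v) : ℂ) = 0 := horth _ hdiff hdiff0
  have hperp' : (inner ℂ (u - b - v) b : ℂ) = 0 := by
    rw [← inner_conj_symm, hperp, map_zero]
  have hpyth := norm_add_sq_eq_norm_sq_add_norm_sq_of_inner_eq_zero (u - b - v) b hperp'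
  have hdecomp : u - v = u - b - v + b := by abel
  rw [← hdecomp] at hpyth
  nlinarith [norm_nonneg b, norm_nonneg (u - v), norm_nonneg (u - b - v)]
end
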